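/- arXiv:2306.03994 — 3 statements merged into one kernel-verified Lean document; each statement's English description precedes it below -/
import Mathlib

section
/- Every graph G on n ≥ 4 vertices with minimum degree at least (n+1)/2 is Hamiltonian path-connected, i.e., for every pair of distinct vertices x, y there is a Hamiltonian path in G with endpoints x and y. -/
open List Finset

namespace OreHPC

variable {W : Type*}

/-- Cyclic chain: every consecutive pair (with wraparound) is related. -/
def CChain (R : W → W → Prop) (l : List W) : Prop :=
  ∀ i (h : i < l.length),
    R (l[i]) (l[(i+1) % l.length]'(Nat.mod_lt _ (lt_of_le_of_lt (Nat.zero_le i) h)))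

lemma CChain.rotate {R : W → W → Prop} {l : List W} (h : CChain R l) (k : ℕ) :
    CChain R (l.rotate k) := by
  intro i hi
  rw [List.length_rotate] at hi
  have hlpos : 0 < l.length := lt_of_le_of_lt (Nat.zero_le i) hi
  simp only [List.getElem_rotate, List.length_rotate]
  have h1 : ((i + 1) % l.length + k) % l.length = ((i + k) % l.length + 1) % l.length := by
    rw [Nat.mod_add_mod, Nat.mod_add_mod]
    ring_nf
  simp only [h1]
  exact h ((i + k) % l.length) (Nat.mod_lt _ hlpos)

lemma cchain_of_chain' {R : W → W → Prop} {l : List W} (hne : l ≠ [])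
    (hc : List.Chain' R l) (hw : R (l.getLast hne) (l.head hne)) : CChain R l := by
  intro i hi
  rcases Nat.lt_or_ge i (l.length - 1) with h | h
  · simp only [show (i + 1) % l.length = i + 1 from Nat.mod_eq_of_lt (by omega)]
    have := List.isChain_iff_getElem.1 hc i (by omega)
    simpa using this
  · have hlpos : 0 < l.length := lt_of_le_of_lt (Nat.zero_le i) hi
    have hi' : i = l.length - 1 := by omega
    subst hi'
    simp only [show (l.length - 1 + 1) % l.length = 0 by
      rw [Nat.sub_add_cancel hlpos, Nat.mod_self]]
    rw [List.getLast_eq_getElem, List.head_eq_getElem] at hw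
    exact hw

lemma CChain.chain' {R : W → W → Prop} {l : List W} (h : CChain R l) : List.Chain' R l := by
  unfold List.Chain'; rw [List.isChain_iff_getElem]
  intro i hi
  have h2 := h i (by omega)
  simp only [show (i + 1) % l.length = i + 1 from Nat.mod_eq_of_lt (by omega)] at h2
  simpa using h2

lemma CChain.wrap {R : W → W → Prop} {l : List W} (h : CChain R l) (hne : l ≠ []) :
    R (l.getLast hne) (l.head hne) := by
  have hlpos : 0 < l.length := List.length_pos_iff.2 hne
  have h2 := h (l.length - 1) (by omega)
  simp only [show (l.length - 1 + 1) % l.length = 0 by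
    rw [Nat.sub_add_cancel hlpos, Nat.mod_self]] at h2
  rw [List.getLast_eq_getElem, List.head_eq_getElem]
  exact h2



/-- From a nonempty chain list, get a walk with that support. -/
lemma exists_walk_of_chain' (G : SimpleGraph W) :
    ∀ (l : List W) (hne : l ≠ []), l.Chain' G.Adj →
      ∃ p : G.Walk (l.head hne) (l.getLast hne), p.support = l := by
  intro l
  induction l with
  | nil => intro h; exact absurd rfl h
  | cons a t ih =>
    intro _ hc
    cases t with
    | nil => exact ⟨SimpleGraph.Walk.nil, rfl⟩
    | cons b t' =>
      have hadj : G.Adj a b := List.isChain_cons_cons.1 hc |>.1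
      have hc' : List.Chain' G.Adj (b :: t') := List.isChain_cons_cons.1 hc |>.2
      obtain ⟨p, hp⟩ := ih (List.cons_ne_nil _ _) hc'
      have hl : (a :: b :: t').getLast (List.cons_ne_nil _ _)
          = (b :: t').getLast (List.cons_ne_nil _ _) := List.getLast_cons _
      refine ⟨(SimpleGraph.Walk.cons hadj p).copy rfl hl.symm, ?_⟩
      exact congrArg (List.cons a) hp

/-- Graph `K` plus an edge `a b`. -/
def addEdge (K : SimpleGraph W) (a b : W) : SimpleGraph W where
  Adj c d := K.Adj c d ∨ (a ≠ b ∧ ((c = a ∧ d = b) ∨ (c = b ∧ d = a)))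
  symm := by constructor; intro c d h; rcases h with h | ⟨hne, h | h⟩
             · exact Or.inl h.symm
             · exact Or.inr ⟨hne, Or.inr ⟨h.2, h.1⟩⟩
             · exact Or.inr ⟨hne, Or.inl ⟨h.2, h.1⟩⟩
  loopless := by constructor; intro c h; rcases h with h | ⟨hne, h | h⟩
                 · exact K.loopless.irrefl c h
                 · exact hne (h.1.symm.trans h.2)
                 · exact hne (h.2.symm.trans h.1)

instance addEdge.decRel (K : SimpleGraph W) [DecidableEq W] [DecidableRel K.Adj] (a b : W) :
    DecidableRel (addEdge K a b).Adj := fun _ _ => by unfold addEdge; simp only; infer_instance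

lemma le_addEdge (K : SimpleGraph W) (a b : W) : K ≤ addEdge K a b := fun _ _ h => Or.inl h

/-- Existence of a Hamiltonian cycle, phrased with cyclic lists. -/
def HamCyc (K : SimpleGraph W) : Prop :=
  ∃ l : List W, l ≠ [] ∧ l.Nodup ∧ (∀ w, w ∈ l) ∧ CChain K.Adj l

lemma length_eq_card [Fintype W] [DecidableEq W] {l : List W} (hnd : l.Nodup)
    (hall : ∀ w, w ∈ l) : l.length = Fintype.card W := by
  have h1 : l.toFinset = Finset.univ := Finset.eq_univ_iff_forall.2 (by simpa using hall)
  rw [← Finset.card_univ, ← h1, List.toFinset_card_of_nodup hnd]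




lemma posa [Fintype W] [DecidableEq W] (K : SimpleGraph W) [DecidableRel K.Adj]
    {l : List W} (hne : l ≠ []) (hnd : l.Nodup) (hall : ∀ w, w ∈ l)
    (hc : List.Chain' K.Adj l) {u v : W}
    (hu : l.head hne = u) (hv : l.getLast hne = v)
    (hnadj : ¬K.Adj u v)
    (hdeg : Fintype.card W ≤ K.degree u + K.degree v)
    (h3 : 3 ≤ Fintype.card W) : HamCyc K := by
  set n := l.length with hn
  have hcard : n = Fintype.card W := length_eq_card hnd hall
  have hn3 : 3 ≤ n := hcard ▸ h3
  have hidx : ∀ w : W, l.idxOf w < n := fun w => List.idxOf_lt_length_iff.2 (hall w)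
  have hget : ∀ w : W, l[l.idxOf w]'(hidx w) = w := fun w => List.getElem_idxOf (hidx w)
  have hinj : ∀ w w' : W, l.idxOf w = l.idxOf w' → w = w' := by
    intro w w' h
    rw [← hget w, ← hget w']
    congr 1
  have hgetinj : ∀ (i j : ℕ) (hi : i < n) (hj : j < n), l[i] = l[j] → i = j := by
    intro i j hi hj h
    have h2 : l.get ⟨i, hi⟩ = l.get ⟨j, hj⟩ := by simpa using h
    have := List.nodup_iff_injective_get.1 hnd h2
    simpa using this
  have hl0 : l[0]'(by omega) = u := by rw [← hu, List.head_eq_getElem]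
  have hln : l[n-1]'(by omega) = v := by rw [← hv, List.getLast_eq_getElem]
  have hidxu : ∀ w : W, w ≠ u → 1 ≤ l.idxOf w := by
    intro w hw
    by_contra h
    exact hw (by rw [← hget w]; simp [Nat.lt_one_iff.1 (not_le.1 h), hl0])
  have hidxv : ∀ w : W, w ≠ v → l.idxOf w ≤ n - 2 := by
    intro w hw
    have h1 := hidx w
    rcases Nat.lt_or_ge (l.idxOf w) (n-1) with h | h
    · omega
    · have : l.idxOf w = n - 1 := by omega
      exact absurd (by rw [← hget w]; simp [this, hln]) hw
  -- the two index sets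
  set S : Finset ℕ := (K.neighborFinset u).image (fun w => l.idxOf w - 1) with hS
  set T : Finset ℕ := (K.neighborFinset v).image (fun w => l.idxOf w) with hT
  have hScard : S.card = K.degree u := by
    rw [hS, Finset.card_image_of_injOn, SimpleGraph.card_neighborFinset_eq_degree]
    intro w hw w' hw' h
    simp only at h
    simp only [Finset.mem_coe, SimpleGraph.mem_neighborFinset] at hw hw'
    have h1 : 1 ≤ l.idxOf w := hidxu w (fun he => K.loopless.irrefl u (he ▸ hw))
    have h2 : 1 ≤ l.idxOf w' := hidxu w' (fun he => K.loopless.irrefl u (he ▸ hw'))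
    exact hinj _ _ (by omega)
  have hTcard : T.card = K.degree v := by
    rw [hT, Finset.card_image_of_injOn, SimpleGraph.card_neighborFinset_eq_degree]
    intro w hw w' hw' h
    exact hinj _ _ h
  have hSsub : S ⊆ Finset.range (n-1) := by
    intro i hi
    rw [hS, Finset.mem_image] at hi
    obtain ⟨w, hw, rfl⟩ := hi
    rw [SimpleGraph.mem_neighborFinset] at hw
    have hwv : w ≠ v := fun he => hnadj (he ▸ hw)
    have := hidxv w hwv
    rw [Finset.mem_range]
    omega
  have hTsub : T ⊆ Finset.range (n-1) := by
    intro i hi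
    rw [hT, Finset.mem_image] at hi
    obtain ⟨w, hw, rfl⟩ := hi
    rw [SimpleGraph.mem_neighborFinset] at hw
    have hwv : w ≠ v := fun he => K.loopless.irrefl v (he ▸ hw)
    have := hidxv w hwv
    rw [Finset.mem_range]
    omega
  have hinter : (S ∩ T).Nonempty := by
    rw [← Finset.card_pos]
    have h1 := Finset.card_union_add_card_inter S T
    have h2 : (S ∪ T).card ≤ n - 1 := by
      calc (S ∪ T).card ≤ (Finset.range (n-1)).card :=
            Finset.card_le_card (Finset.union_subset hSsub hTsub)
        _ = n - 1 := Finset.card_range _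
    omega
  obtain ⟨i, hi⟩ := hinter
  rw [Finset.mem_inter, hS, hT, Finset.mem_image, Finset.mem_image] at hi
  obtain ⟨⟨w1, hw1, hw1i⟩, ⟨w2, hw2, hw2i⟩⟩ := hi
  rw [SimpleGraph.mem_neighborFinset] at hw1 hw2
  have hw1u : w1 ≠ u := fun he => K.loopless.irrefl u (he ▸ hw1)
  have hw1v : w1 ≠ v := fun he => hnadj (he ▸ hw1)
  have hw2u : w2 ≠ u := fun he => hnadj (K.adj_symm (he ▸ hw2))
  have hw2v : w2 ≠ v := fun he => K.loopless.irrefl v (he ▸ hw2)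
  have hi1 : l.idxOf w1 = i + 1 := by have := hidxu w1 hw1u; omega
  have hi2 : l.idxOf w2 = i := hw2i
  have hiub : i + 1 ≤ n - 2 := by have := hidxv w1 hw1v; omega
  have hilb : 1 ≤ i := by have := hidxu w2 hw2u; omega
  have hin : i + 1 < n := by omega
  have adj1 : K.Adj u (l[i+1]'hin) := by
    have h := hget w1; simp only [hi1] at h; rw [h]; exact hw1
  have adj2 : K.Adj v (l[i]'(by omega)) := by
    have h := hget w2; simp only [hi2] at h; rw [h]; exact hw2
  -- construct the rotated cyclic list
  set t1 := l.take (i+1) with ht1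
  set d := l.drop (i+1) with hd
  have ht1len : t1.length = i + 1 := by rw [ht1, List.length_take]; omega
  have hdlen : d.length = n - (i+1) := by rw [hd, List.length_drop]
  have ht1ne : t1 ≠ [] := by intro h; rw [h] at ht1len; simp at ht1len
  have hdne : d ≠ [] := by
    intro h; rw [h] at hdlen; simp at hdlen; omega
  have hdrne : d.reverse ≠ [] := by simpa using hdne
  refine ⟨t1 ++ d.reverse, by simp [ht1ne], ?_, ?_, ?_⟩
  · have hperm : (t1 ++ d.reverse).Perm l := by
      calc (t1 ++ d.reverse).Perm (t1 ++ d) := List.Perm.append_left _ (List.reverse_perm d)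
        _ = l := List.take_append_drop _ _
    exact hperm.nodup_iff.2 hnd
  · intro w
    have hperm : (t1 ++ d.reverse).Perm l := by
      calc (t1 ++ d.reverse).Perm (t1 ++ d) := List.Perm.append_left _ (List.reverse_perm d)
        _ = l := List.take_append_drop _ _
    exact hperm.mem_iff.2 (hall w)
  · refine cchain_of_chain' (R := K.Adj) (l := t1 ++ d.reverse) (by simp [ht1ne]) ?_ ?_
    · unfold List.Chain' at hc ⊢; rw [List.isChain_append]
      refine ⟨hc.take _, ?_, ?_⟩
      · rw [List.isChain_reverse]
        exact (hc.drop _).imp (fun a b h => h.symm)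
      · intro a ha b hb
        rw [List.getLast?_eq_getLast ht1ne] at ha
        rw [List.head?_eq_head hdrne] at hb
        have ha' : a = l[i]'(by omega) := by
          rw [Option.mem_def, Option.some_inj] at ha
          have h1 := List.getLast_eq_getElem ht1ne
          simp only [ht1len, Nat.add_sub_cancel] at h1
          rw [← ha, h1]
          simp [ht1, List.getElem_take]
        have hb' : b = v := by
          rw [Option.mem_def, Option.some_inj] at hb
          rw [← hb, List.head_reverse, List.getLast_drop, hv]
        rw [ha', hb']
        exact adj2.symm
    · -- wraparound adjacency
      have hlast : (t1 ++ d.reverse).getLast (by simp [ht1ne]) = l[i+1]'hin := by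
        rw [List.getLast_append]
        simp only [List.isEmpty_iff]
        rw [dif_neg hdrne]
        rw [List.getLast_reverse]
        have h1 := List.head_eq_getElem hdne
        rw [h1]
        simp [hd, List.getElem_drop]
      have hhead : (t1 ++ d.reverse).head (by simp [ht1ne]) = u := by
        rw [List.head_append]
        simp only [List.isEmpty_iff]
        rw [dif_neg ht1ne, List.head_take, hu]
      rw [hlast, hhead]
      exact adj1.symm




lemma addEdge_adj_iff {K : SimpleGraph W} {a b c d : W} :
    (addEdge K a b).Adj c d ↔ K.Adj c d ∨ (a ≠ b ∧ ((c = a ∧ d = b) ∨ (c = b ∧ d = a))) :=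
  Iff.rfl

lemma addEdge_comm {K : SimpleGraph W} {a b c d : W} :
    (addEdge K a b).Adj c d ↔ (addEdge K b a).Adj c d := by
  simp only [addEdge_adj_iff]
  constructor <;> (rintro (h | ⟨hne, h | h⟩))
  · exact Or.inl h
  · exact Or.inr ⟨hne.symm, Or.inr h⟩
  · exact Or.inr ⟨hne.symm, Or.inl h⟩
  · exact Or.inl h
  · exact Or.inr ⟨hne.symm, Or.inr h⟩
  · exact Or.inr ⟨hne.symm, Or.inl h⟩

lemma closure_step_aux [Fintype W] [DecidableEq W] (K : SimpleGraph W) [DecidableRel K.Adj]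
    {a b : W} (hnadj : ¬K.Adj a b)
    (hdeg : Fintype.card W ≤ K.degree a + K.degree b)
    (h3 : 3 ≤ Fintype.card W)
    {l : List W} (hnd : l.Nodup) (hall : ∀ w, w ∈ l)
    (hcc : CChain (addEdge K a b).Adj l)
    {i : ℕ} (hi : i < l.length)
    (h1 : l[i] = a)
    (h2 : l[(i+1) % l.length]'(Nat.mod_lt _ (lt_of_le_of_lt (Nat.zero_le i) hi)) = b) :
    HamCyc K := by
  set n := l.length with hn
  have hab : a ≠ b := by
    intro h; subst h
    exact hnadj (by
      have := hcc i hi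
      rw [addEdge_adj_iff] at this
      rcases this with h | ⟨hne, _⟩
      · rw [h1, h2] at h; exact absurd (K.loopless.irrefl a h) (fun f => f)
      · exact absurd rfl hne)
  have hcard : n = Fintype.card W := length_eq_card hnd hall
  have hn3 : 3 ≤ n := hcard ▸ h3
  have hn0 : 0 < n := by omega
  set k := (i+1) % n with hk
  have hkn : k < n := Nat.mod_lt _ hn0
  set l' := l.rotate k with hl'
  have hlen' : l'.length = n := by rw [hl', List.length_rotate]
  have hperm : l'.Perm l := List.rotate_perm l k
  have hnd' : l'.Nodup := hperm.nodup_iff.2 hnd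
  have hall' : ∀ w, w ∈ l' := fun w => hperm.mem_iff.2 (hall w)
  have hne' : l' ≠ [] := by
    intro h; rw [h] at hlen'; simp at hlen'; omega
  have hget' : ∀ (j : ℕ) (hj : j < n), l'[j]'(by omega) = l[(j + k) % n]'(Nat.mod_lt _ hn0) := by
    intro j hj
    simp only [hl', List.getElem_rotate]; rfl
  have hhead : l'[0]'(by omega) = b := by
    rw [hget' 0 hn0]
    simp only [Nat.zero_add]
    simp only [Nat.mod_eq_of_lt hkn]
    rw [← h2]
  have hlast : l'[n-1]'(by omega) = a := by
    rw [hget' (n-1) (by omega)]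
    have harith : (n - 1 + k) % n = i := by
      rcases Nat.lt_or_ge (i+1) n with h | h
      · have : k = i + 1 := by rw [hk]; exact Nat.mod_eq_of_lt h
        rw [this]
        have : n - 1 + (i + 1) = n + i := by omega
        rw [this, Nat.add_mod_left, Nat.mod_eq_of_lt (by omega)]
      · have hieq : i + 1 = n := by omega
        have : k = 0 := by rw [hk, hieq, Nat.mod_self]
        rw [this, Nat.add_zero, Nat.mod_eq_of_lt (by omega)]
        omega
    simp only [harith]
    exact h1
  have hgetinj' : ∀ (j1 j2 : ℕ) (hj1 : j1 < n) (hj2 : j2 < n),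
      l'[j1]'(by omega) = l'[j2]'(by omega) → j1 = j2 := by
    intro j1 j2 hj1 hj2 h
    have h2' : l'.get ⟨j1, by omega⟩ = l'.get ⟨j2, by omega⟩ := by simpa using h
    have := List.nodup_iff_injective_get.1 hnd' h2'
    simpa using this
  have hcc' : CChain (addEdge K a b).Adj l' := hcc.rotate k
  have hchain : List.Chain' K.Adj l' := by
    unfold List.Chain'; rw [List.isChain_iff_getElem]
    intro j hj
    rw [hlen'] at hj
    have hadj := hcc' j (by omega)
    simp only [hlen'] at hadj
    simp only [show (j+1) % n = j + 1 from Nat.mod_eq_of_lt (by omega)] at hadj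
    rw [addEdge_adj_iff] at hadj
    rcases hadj with h | ⟨_, ⟨ha', hb'⟩ | ⟨hb', ha'⟩⟩
    · exact h
    · -- l'[j] = a = l'[n-1] forces j = n-1, contradiction
      exfalso
      have := hgetinj' j (n-1) (by omega) (by omega) (by rw [ha', hlast])
      omega
    · -- l'[j] = b = l'[0] and l'[j+1] = a = l'[n-1]
      exfalso
      have hj0 : j = 0 := hgetinj' j 0 (by omega) (by omega) (by rw [hb', hhead])
      have hj1 : j + 1 = n - 1 := hgetinj' (j+1) (n-1) (by omega) (by omega) (by rw [ha', hlast])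
      omega
  refine posa K hne' hnd' hall' hchain (u := b) (v := a) ?_ ?_
    (fun h => hnadj h.symm) (by omega) h3
  · rw [List.head_eq_getElem]
    rw [← hhead]
  · rw [List.getLast_eq_getElem]
    simp only [hlen']
    exact hlast

lemma closure_step [Fintype W] [DecidableEq W] (K : SimpleGraph W) [DecidableRel K.Adj]
    {a b : W} (hnadj : ¬K.Adj a b)
    (hdeg : Fintype.card W ≤ K.degree a + K.degree b)
    (h3 : 3 ≤ Fintype.card W)
    (h : HamCyc (addEdge K a b)) : HamCyc K := by
  obtain ⟨l, hne, hnd, hall, hcc⟩ := h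
  by_cases hK : ∀ (i : ℕ) (hi : i < l.length),
      K.Adj (l[i]) (l[(i+1) % l.length]'(Nat.mod_lt _ (lt_of_le_of_lt (Nat.zero_le i) hi)))
  · exact ⟨l, hne, hnd, hall, hK⟩
  · push_neg at hK
    obtain ⟨i, hi, hni⟩ := hK
    have hadj := hcc i hi
    rw [addEdge_adj_iff] at hadj
    rcases hadj with h | ⟨hab, ⟨h1, h2⟩ | ⟨h1, h2⟩⟩
    · exact absurd h hni
    · exact closure_step_aux K hnadj hdeg h3 hnd hall hcc hi h1 h2
    · refine closure_step_aux (a := b) (b := a) K (fun h => hnadj h.symm)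
        (by omega) h3 hnd hall ?_ hi h1 h2
      intro j hj
      rw [← addEdge_comm]
      exact hcc j hj


variable {V : Type*} [Fintype V] [DecidableEq V]


/-- The auxiliary adjacency: `G` plus a new vertex `none` joined to `x` and `y`. -/
def auxAdj (G : SimpleGraph V) (x y : V) : Option V → Option V → Prop
  | some u, some v => G.Adj u v
  | some u, none => u = x ∨ u = y
  | none, some v => v = x ∨ v = y
  | none, none => False

def auxGraph (G : SimpleGraph V) (x y : V) : SimpleGraph (Option V) where
  Adj := auxAdj G x y
  symm := by
    constructor
    rintro (_ | u) (_ | v) h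
    · exact h
    · exact h
    · exact h
    · exact G.symm.symm _ _ h
  loopless := by
    constructor
    rintro (_ | u) h
    · exact h
    · exact G.loopless.irrefl u h

instance auxGraph.decRel (G : SimpleGraph V) [DecidableRel G.Adj] (x y : V) :
    DecidableRel (auxGraph G x y).Adj := fun a b =>
  match a, b with
  | some u, some v => inferInstanceAs (Decidable (G.Adj u v))
  | some u, none => inferInstanceAs (Decidable (u = x ∨ u = y))
  | none, some v => inferInstanceAs (Decidable (v = x ∨ v = y))
  | none, none => inferInstanceAs (Decidable False)

lemma auxGraph_adj_some_some {G : SimpleGraph V} {x y u v : V} :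
    (auxGraph G x y).Adj (some u) (some v) ↔ G.Adj u v := Iff.rfl

lemma auxGraph_adj_none_some {G : SimpleGraph V} {x y v : V} :
    (auxGraph G x y).Adj none (some v) ↔ v = x ∨ v = y := Iff.rfl

lemma auxGraph_adj_some_none {G : SimpleGraph V} {x y u : V} :
    (auxGraph G x y).Adj (some u) none ↔ u = x ∨ u = y := Iff.rfl

lemma degree_le_of_aux_le {G : SimpleGraph V} [DecidableRel G.Adj] {x y : V}
    (K : SimpleGraph (Option V)) [DecidableRel K.Adj]
    (hK : auxGraph G x y ≤ K) (u : V) :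
    G.degree u ≤ K.degree (some u) := by
  rw [← SimpleGraph.card_neighborFinset_eq_degree, ← SimpleGraph.card_neighborFinset_eq_degree]
  have h1 : (G.neighborFinset u).image some ⊆ K.neighborFinset (some u) := by
    intro w hw
    rw [Finset.mem_image] at hw
    obtain ⟨v, hv, rfl⟩ := hw
    rw [SimpleGraph.mem_neighborFinset] at hv ⊢
    exact hK (auxGraph_adj_some_some.2 hv)
  calc (G.neighborFinset u).card = ((G.neighborFinset u).image some).card :=
        (Finset.card_image_of_injective _ (Option.some_injective V)).symm
    _ ≤ (K.neighborFinset (some u)).card := Finset.card_le_card h1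

lemma exists_eq_map_some : ∀ (m : List (Option V)), none ∉ m → ∃ t : List V, m = t.map some := by
  intro m
  induction m with
  | nil => exact fun _ => ⟨[], rfl⟩
  | cons a m ih =>
    intro h
    obtain ⟨t, ht⟩ := ih (fun hm => h (List.mem_cons_of_mem _ hm))
    cases a with
    | none => exact absurd (List.mem_cons_self) h
    | some v => exact ⟨v :: t, by rw [List.map_cons, ht]⟩

/-- Base case: if all pairs `some u, some v` are adjacent, `K` has a Hamiltonian cycle. -/
lemma base_case (G : SimpleGraph V) (x y : V) (hxy : x ≠ y)
    (K : SimpleGraph (Option V)) (hK : auxGraph G x y ≤ K)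
    (hcomp : ∀ u v : V, u ≠ v → K.Adj (some u) (some v)) : HamCyc K := by
  set t := ((Finset.univ.erase x).erase y).toList with ht
  have htnd : t.Nodup := Finset.nodup_toList _
  have htmem : ∀ v : V, v ∈ t ↔ (v ≠ y ∧ v ≠ x) := by
    intro v
    rw [ht, Finset.mem_toList, Finset.mem_erase, Finset.mem_erase]
    simp
  set L1 : List V := x :: (t ++ [y]) with hL1
  have hL1nd : L1.Nodup := by
    rw [hL1, List.nodup_cons, List.nodup_append]
    refine ⟨?_, htnd, List.nodup_singleton y, ?_⟩
    · intro hx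
      rw [List.mem_append] at hx
      rcases hx with hx | hx
      · exact ((htmem x).1 hx).2 rfl
      · exact hxy (List.mem_singleton.1 hx)
    · intro a ha b hb
      rw [List.mem_singleton] at hb
      subst hb
      exact ((htmem a).1 ha).1
  have hL1mem : ∀ v : V, v ∈ L1 := by
    intro v
    rw [hL1]
    by_cases hvx : v = x
    · exact hvx ▸ List.mem_cons_self
    · by_cases hvy : v = y
      · exact List.mem_cons_of_mem _ (List.mem_append_right _ (hvy ▸ List.mem_singleton_self _))
      · exact List.mem_cons_of_mem _ (List.mem_append_left _ ((htmem v).2 ⟨hvy, hvx⟩))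
  have hL1ne : L1 ≠ [] := by rw [hL1]; exact List.cons_ne_nil _ _
  have hL1last : L1.getLast hL1ne = y := by
    have h0 : (x :: (t ++ [y])).getLast (List.cons_ne_nil _ _) = y := by
      rw [List.getLast_cons (by simp : t ++ [y] ≠ [])]
      exact List.getLast_concat
    exact h0
  have hL1head : L1.head hL1ne = x := rfl
  refine ⟨none :: L1.map some, List.cons_ne_nil _ _, ?_, ?_, ?_⟩
  · rw [List.nodup_cons]
    constructor
    · simp
    · exact hL1nd.map (Option.some_injective V)
  · intro w
    cases w with
    | none => exact List.mem_cons_self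
    | some v => exact List.mem_cons_of_mem _ (List.mem_map_of_mem (hL1mem v))
  · refine cchain_of_chain' (List.cons_ne_nil _ _) ?_ ?_
    · unfold List.Chain'; rw [List.isChain_cons]
      constructor
      · intro w hw
        rw [List.head?_map, hL1] at hw
        simp only [List.head?_cons, Option.map_some] at hw
        rw [Option.mem_def, Option.some_inj] at hw
        subst hw
        exact hK (auxGraph_adj_none_some.2 (Or.inl rfl))
      · refine List.Pairwise.isChain ?_
        rw [List.pairwise_map]
        refine hL1nd.imp ?_
        intro a b hab
        exact hcomp a b hab
    · have hmapne : L1.map some ≠ [] := by simp [hL1ne]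
      have hlast : (none :: L1.map some).getLast (List.cons_ne_nil _ _) = some y := by
        rw [List.getLast_cons hmapne]
        have := List.getLast?_map (f := some) (l := L1)
        rw [List.getLast?_eq_getLast hL1ne, List.getLast?_eq_getLast hmapne] at this
        simp only [Option.map_some, Option.some_inj] at this
        rw [this, hL1last]
      rw [hlast]
      show K.Adj (some y) ((none : Option V))
      exact hK (auxGraph_adj_some_none.2 (Or.inr rfl))




lemma closure_induction (G : SimpleGraph V) [DecidableRel G.Adj] (x y : V) (hxy : x ≠ y)
    (hn : 4 ≤ Fintype.card V)
    (hδ : ∀ v : V, Fintype.card V + 1 ≤ 2 * G.degree v) :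
    ∀ (k : ℕ) (K : SimpleGraph (Option V)) [DecidableRel K.Adj],
      auxGraph G x y ≤ K →
      (Finset.univ.filter
        (fun p : V × V => p.1 ≠ p.2 ∧ ¬K.Adj (some p.1) (some p.2))).card ≤ k →
      HamCyc K := by
  intro k
  induction k with
  | zero =>
    intro K instK hK hcard
    refine base_case G x y hxy K hK ?_
    intro u v huv
    by_contra hnadj
    have hmem : (u, v) ∈ Finset.univ.filter
        (fun p : V × V => p.1 ≠ p.2 ∧ ¬K.Adj (some p.1) (some p.2)) := by
      rw [Finset.mem_filter]
      exact ⟨Finset.mem_univ _, huv, hnadj⟩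
    have := Finset.card_eq_zero.1 (Nat.le_zero.1 hcard)
    rw [this] at hmem
    exact absurd hmem (Finset.notMem_empty _)
  | succ k ih =>
    intro K instK hK hcard
    by_cases hcomp : ∀ u v : V, u ≠ v → K.Adj (some u) (some v)
    · exact base_case G x y hxy K hK hcomp
    · push_neg at hcomp
      obtain ⟨u, v, huv, hnadj⟩ := hcomp
      set K' := addEdge K (some u) (some v) with hK'def
      have hK' : auxGraph G x y ≤ K' := le_trans hK (le_addEdge K _ _)
      have hsub : Finset.univ.filter
            (fun p : V × V => p.1 ≠ p.2 ∧ ¬K'.Adj (some p.1) (some p.2)) ⊂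
          Finset.univ.filter
            (fun p : V × V => p.1 ≠ p.2 ∧ ¬K.Adj (some p.1) (some p.2)) := by
        constructor
        · intro p hp
          rw [Finset.mem_filter] at hp ⊢
          exact ⟨hp.1, hp.2.1, fun h => hp.2.2 (le_addEdge K _ _ h)⟩
        · intro hcon
          have h1 : (u, v) ∈ Finset.univ.filter
              (fun p : V × V => p.1 ≠ p.2 ∧ ¬K.Adj (some p.1) (some p.2)) := by
            rw [Finset.mem_filter]; exact ⟨Finset.mem_univ _, huv, hnadj⟩
          have h2 := hcon h1
          rw [Finset.mem_filter] at h2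
          refine h2.2.2 ?_
          exact Or.inr ⟨fun h => huv (Option.some_injective V h), Or.inl ⟨rfl, rfl⟩⟩
      have hcard' : (Finset.univ.filter
          (fun p : V × V => p.1 ≠ p.2 ∧ ¬K'.Adj (some p.1) (some p.2))).card ≤ k := by
        have := Finset.card_lt_card hsub
        omega
      have hcyc' : HamCyc K' := ih K' hK' hcard'
      refine closure_step K (a := (some u : Option V)) (b := some v) hnadj ?_ ?_ hcyc'
      · rw [Fintype.card_option]
        have d1 := degree_le_of_aux_le K hK u
        have d2 := degree_le_of_aux_le K hK v
        have e1 := hδ u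
        have e2 := hδ v
        omega
      · rw [Fintype.card_option]; omega

lemma extract (G : SimpleGraph V) [DecidableRel G.Adj] (x y : V) (hxy : x ≠ y)
    (hn : 4 ≤ Fintype.card V)
    (h : HamCyc (auxGraph G x y)) :
    ∃ p : G.Walk x y, p.IsPath ∧ p.IsHamiltonian := by
  obtain ⟨l, hne, hnd, hall, hcc⟩ := h
  set K := auxGraph G x y with hKdef
  have hlen : l.length = Fintype.card V + 1 := by
    rw [length_eq_card hnd hall, Fintype.card_option]
  obtain ⟨i0, hidx, hgi0⟩ := List.mem_iff_getElem.1 (hall none)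
  set l' := l.rotate i0 with hl'
  have hperm : l'.Perm l := List.rotate_perm _ _
  have hlen' : l'.length = Fintype.card V + 1 := by rw [hl', List.length_rotate, hlen]
  have hne' : l' ≠ [] := by intro h; rw [h] at hlen'; simp at hlen'
  have hnd' : l'.Nodup := hperm.nodup_iff.2 hnd
  have hall' : ∀ w, w ∈ l' := fun w => hperm.mem_iff.2 (hall w)
  have hcc' : CChain K.Adj l' := hcc.rotate _
  have hhead' : l'.head hne' = none := by
    rw [List.head_eq_getElem]
    simp only [hl', List.getElem_rotate]
    simp only [Nat.zero_add, Nat.mod_eq_of_lt hidx]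
    exact hgi0
  set m := l'.tail with hm
  have hconsm : (none : Option V) :: m = l' := by
    rw [← hhead']; exact List.cons_head_tail hne'
  have hmlen : m.length = Fintype.card V := by
    have : l'.length = m.length + 1 := by rw [← hconsm]; simp
    omega
  have hmne : m ≠ [] := by intro h; rw [h] at hmlen; simp at hmlen; omega
  have hmnd : m.Nodup ∧ (none : Option V) ∉ m := by
    have := hnd'
    rw [← hconsm, List.nodup_cons] at this
    exact ⟨this.2, this.1⟩
  have hmem : ∀ v : V, some v ∈ m := by
    intro v
    have := hall' (some v)
    rw [← hconsm, List.mem_cons] at this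
    rcases this with h | h
    · exact absurd h (by simp)
    · exact h
  have hchain' : List.Chain' K.Adj l' := hcc'.chain'
  have hchainm : (∀ w ∈ m.head?, K.Adj none w) ∧ List.Chain' K.Adj m := by
    unfold List.Chain' at hchain'; rw [← hconsm, List.isChain_cons] at hchain'
    exact hchain'
  have hwrap := hcc'.wrap hne'
  rw [hhead'] at hwrap
  have hlastm : l'.getLast hne' = m.getLast hmne := by
    have h2 : l'.getLast? = some (m.getLast hmne) := by
      rw [← hconsm, List.getLast?_eq_getLast (List.cons_ne_nil _ _), List.getLast_cons hmne]
    rw [List.getLast?_eq_getLast hne'] at h2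
    exact Option.some_inj.1 h2
  rw [hlastm] at hwrap
  obtain ⟨mV, hmap⟩ := exists_eq_map_some m hmnd.2
  have hmVne : mV ≠ [] := by
    intro h; rw [h] at hmap; simp at hmap; exact hmne hmap
  have hmVlen : mV.length = Fintype.card V := by
    rw [hmap, List.length_map] at hmlen; exact hmlen
  have hmVnd : mV.Nodup := by
    have := hmnd.1
    rw [hmap] at this
    exact this.of_map
  have hmVmem : ∀ v : V, v ∈ mV := by
    intro v
    have := hmem v
    rw [hmap, List.mem_map] at this
    obtain ⟨a, ha, he⟩ := this
    rwa [Option.some_injective V he] at ha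
  have hmVchain : List.Chain' G.Adj mV := by
    have := hchainm.2
    unfold List.Chain' at this; rw [hmap, List.isChain_map] at this
    exact this
  have hheadm : m.head hmne = some (mV.head hmVne) := by
    have h1 := List.head?_map (f := some) (l := mV)
    rw [← hmap, List.head?_eq_head hmne, List.head?_eq_head hmVne] at h1
    simpa using h1
  have hlastm' : m.getLast hmne = some (mV.getLast hmVne) := by
    have h1 := List.getLast?_map (f := some) (l := mV)
    rw [← hmap, List.getLast?_eq_getLast hmne, List.getLast?_eq_getLast hmVne] at h1
    simpa using h1
  have hx1 : mV.head hmVne = x ∨ mV.head hmVne = y := by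
    have := hchainm.1 (m.head hmne) (by rw [List.head?_eq_head hmne]; rfl)
    rw [hheadm] at this
    exact auxGraph_adj_none_some.1 this
  have hx2 : mV.getLast hmVne = x ∨ mV.getLast hmVne = y := by
    rw [hlastm'] at hwrap
    exact auxGraph_adj_some_none.1 hwrap
  have hhl : mV.head hmVne ≠ mV.getLast hmVne := by
    intro h
    rw [List.head_eq_getElem, List.getLast_eq_getElem] at h
    have h2 : mV.get ⟨0, by omega⟩ = mV.get ⟨mV.length - 1, by omega⟩ := by simpa using h
    have := List.nodup_iff_injective_get.1 hmVnd h2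
    simp only [Fin.mk.injEq] at this
    omega
  obtain ⟨p, hp⟩ := exists_walk_of_chain' G mV hmVne hmVchain
  have hpath : p.IsPath := by rw [SimpleGraph.Walk.isPath_def, hp]; exact hmVnd
  rcases hx1 with h1 | h1 <;> rcases hx2 with h2 | h2
  · exact absurd (h1.trans h2.symm) hhl
  · refine ⟨p.copy h1 h2, ?_, ?_⟩
    · rw [SimpleGraph.Walk.isPath_def, SimpleGraph.Walk.support_copy, hp]; exact hmVnd
    · refine SimpleGraph.Walk.IsPath.isHamiltonian_of_mem ?_ ?_
      · rw [SimpleGraph.Walk.isPath_def, SimpleGraph.Walk.support_copy, hp]; exact hmVnd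
      · intro w; rw [SimpleGraph.Walk.support_copy, hp]; exact hmVmem w
  · refine ⟨(p.reverse).copy h2 h1, ?_, ?_⟩
    · rw [SimpleGraph.Walk.isPath_def, SimpleGraph.Walk.support_copy,
        SimpleGraph.Walk.support_reverse, List.nodup_reverse, hp]
      exact hmVnd
    · refine SimpleGraph.Walk.IsPath.isHamiltonian_of_mem ?_ ?_
      · rw [SimpleGraph.Walk.isPath_def, SimpleGraph.Walk.support_copy,
          SimpleGraph.Walk.support_reverse, List.nodup_reverse, hp]
        exact hmVnd
      · intro w
        rw [SimpleGraph.Walk.support_copy, SimpleGraph.Walk.support_reverse, List.mem_reverse, hp]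
        exact hmVmem w
  · exact absurd (h1.trans h2.symm) hhl

end OreHPC

/-- **Ore's theorem.** Every graph on `n ≥ 4` vertices with minimum degree at least
`(n+1)/2` is Hamiltonian path-connected: between any two distinct vertices there is a
Hamiltonian path. -/
theorem ore_hamiltonian_path_connected {V : Type*} [Fintype V] [DecidableEq V]
    (G : SimpleGraph V) [DecidableRel G.Adj]
    (hn : 4 ≤ Fintype.card V)
    (hδ : ∀ v : V, Fintype.card V + 1 ≤ 2 * G.degree v) :
    ∀ x y : V, x ≠ y → ∃ p : G.Walk x y, p.IsPath ∧ p.IsHamiltonian := by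
  intro x y hxy
  have hham : OreHPC.HamCyc (OreHPC.auxGraph G x y) :=
    OreHPC.closure_induction G x y hxy hn hδ _ (OreHPC.auxGraph G x y) le_rfl le_rfl
  exact OreHPC.extract G x y hxy hn hham
end

section
/- For every ε > 0 there is a constant C₀ such that for all C ≥ C₀ and n ≥ 2 the following holds. Let log n ≤ d < n and let G be a graph on N = C·d·n vertices with minimum degree δ(G) ≥ (1+ε)·N/2. Then G contains a spanning subdivision of every n-vertex d-regular graph. -/
set_option linter.unusedSectionVars false
set_option linter.deprecated false
set_option linter.unusedVariables false
set_option maxHeartbeats 1000000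

open List Finset

section ListMachinery

variable {V : Type} [DecidableEq V] {G : SimpleGraph V} {l : List V}

/-- A cyclically chained list of vertices. -/
def SRSCyc (G : SimpleGraph V) (l : List V) : Prop :=
  ∀ (i : ℕ) (h : i < l.length),
    G.Adj (l.get ⟨i, h⟩)
      (l.get ⟨(i+1) % l.length, Nat.mod_lt _ (Nat.lt_of_le_of_lt (Nat.zero_le i) h)⟩)

lemma srs_get_congr (l : List V) {i j : ℕ} (hi : i < l.length) (h : i = j) :
    l.get ⟨i, hi⟩ = l.get ⟨j, h ▸ hi⟩ := by subst h; rfl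

lemma SRSCyc.chain' (hc : SRSCyc G l) : l.Chain' G.Adj := by
  refine List.isChain_iff_getElem.2 ?_
  intro i h
  have h1 : i < l.length := by omega
  have h2 : (i+1) % l.length = i + 1 := Nat.mod_eq_of_lt (by omega)
  have := hc i h1
  rwa [srs_get_congr l _ h2] at this

lemma SRSCyc.rotate (hc : SRSCyc G l) (n : ℕ) : SRSCyc G (l.rotate n) := by
  intro i h
  have hlen : (l.rotate n).length = l.length := l.length_rotate n
  have hpos : 0 < l.length := by omega
  rw [List.get_rotate, List.get_rotate]
  have key : ((i + 1) % (l.rotate n).length + n) % l.length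
      = ((i + n) % l.length + 1) % l.length := by
    rw [hlen, Nat.mod_add_mod, Nat.mod_add_mod]
    congr 1
    omega
  rw [srs_get_congr l _ key]
  exact hc ((i + n) % l.length) (Nat.mod_lt _ hpos)

lemma srs_cross_len {i : ℕ} (hi : i + 1 < l.length) :
    (l.take (i+1) ++ (l.drop (i+1)).reverse).length = l.length := by
  simp [length_append, length_take, length_reverse, length_drop]
  omega

lemma srs_cross_get1 {i : ℕ} (hi : i + 1 < l.length) (j : ℕ) (hj : j ≤ i) :
    (l.take (i+1) ++ (l.drop (i+1)).reverse).get ⟨j, by rw [srs_cross_len hi]; omega⟩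
      = l.get ⟨j, by omega⟩ := by
  have h1 : j < (l.take (i+1)).length := by rw [length_take]; omega
  rw [List.get_eq_getElem, List.get_eq_getElem, List.getElem_append_left h1]
  exact List.getElem_take

lemma srs_cross_get2 {i : ℕ} (hi : i + 1 < l.length) (j : ℕ) (hj1 : i < j)
    (hj2 : j < l.length) :
    (l.take (i+1) ++ (l.drop (i+1)).reverse).get ⟨j, by rw [srs_cross_len hi]; omega⟩
      = l.get ⟨l.length + i - j, by omega⟩ := by
  have h1 : (l.take (i+1)).length = i + 1 := by rw [length_take]; omega
  simp only [List.get_eq_getElem, Fin.val_mk]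
  rw [List.getElem_append_right (by omega),
    List.getElem_reverse, List.getElem_drop]
  have hdl : (l.drop (i+1)).length = l.length - (i+1) := by rw [length_drop]
  congr 1
  simp only [h1, hdl]
  omega

/-- the crossing construction -/
lemma srs_cross (hc : l.Chain' G.Adj) {i : ℕ} (hi : i + 1 < l.length)
    (hA : G.Adj (l.get ⟨0, by omega⟩) (l.get ⟨i+1, hi⟩))
    (hB : G.Adj (l.getLast (by rintro rfl; simp at hi)) (l.get ⟨i, by omega⟩)) :
    SRSCyc G (l.take (i+1) ++ (l.drop (i+1)).reverse) := by
  intro j hj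
  have hlen := srs_cross_len (l := l) hi
  rw [hlen] at hj
  have hpos : 0 < l.length := by omega
  rcases Nat.lt_or_ge (j+1) (i+1) with h1 | h1
  · have hm : (j+1) % (l.take (i+1) ++ (l.drop (i+1)).reverse).length = j + 1 := by
      rw [hlen]; exact Nat.mod_eq_of_lt (by omega)
    rw [srs_get_congr _ _ hm, srs_cross_get1 hi j (by omega),
      srs_cross_get1 hi (j+1) (by omega)]
    exact List.isChain_iff_getElem.1 hc j (by omega)
  · rcases Nat.lt_or_ge j (i+1) with h2 | h2
    · have hji : j = i := by omega
      subst hji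
      rcases Nat.lt_or_ge (j+1) l.length with h3 | h3
      · have hm : (j+1) % (l.take (j+1) ++ (l.drop (j+1)).reverse).length = j + 1 := by
          rw [hlen]; exact Nat.mod_eq_of_lt (by omega)
        rw [srs_get_congr _ _ hm, srs_cross_get1 hi j (by omega),
          srs_cross_get2 hi (j+1) (by omega) (by omega)]
        have hh : l.length + j - (j+1) = l.length - 1 := by omega
        rw [srs_get_congr _ _ hh]
        rw [List.getLast_eq_getElem] at hB
        exact hB.symm
      · omega
    · rcases Nat.lt_or_ge (j+1) l.length with h3 | h3
      · have hm : (j+1) % (l.take (i+1) ++ (l.drop (i+1)).reverse).length = j + 1 := by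
          rw [hlen]; exact Nat.mod_eq_of_lt (by omega)
        rw [srs_get_congr _ _ hm, srs_cross_get2 hi j (by omega) (by omega),
          srs_cross_get2 hi (j+1) (by omega) (by omega)]
        have h5 : l.length + i - (j+1) + 1 = l.length + i - j := by omega
        have : G.Adj (l.get ⟨l.length + i - (j+1), by omega⟩)
            (l.get ⟨l.length + i - (j+1) + 1, by omega⟩) :=
          List.isChain_iff_getElem.1 hc (l.length + i - (j+1)) (by omega)
        rw [srs_get_congr _ _ h5] at this
        exact this.symm
      · have hm : (j+1) % (l.take (i+1) ++ (l.drop (i+1)).reverse).length = 0 := by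
          rw [hlen]
          have : j + 1 = l.length := by omega
          simp [this]
        rw [srs_get_congr _ _ hm, srs_cross_get1 hi 0 (by omega),
          srs_cross_get2 hi j (by omega) (by omega)]
        have h6 : l.length + i - j = i + 1 := by omega
        rw [srs_get_congr _ _ h6]
        exact hA.symm

lemma srs_cross_perm (l : List V) (i : ℕ) :
    (l.take (i+1) ++ (l.drop (i+1)).reverse).Perm l := by
  have h1 : (l.take (i+1) ++ (l.drop (i+1)).reverse).Perm
      (l.take (i+1) ++ l.drop (i+1)) := List.Perm.append_left _ (List.reverse_perm _)
  rw [List.take_append_drop] at h1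
  exact h1

end ListMachinery

section GraphMachinery

variable {V : Type} [Fintype V] [DecidableEq V] {G : SimpleGraph V} [DecidableRel G.Adj]

lemma srs_dirac (G : SimpleGraph V) [DecidableRel G.Adj] (S : Finset V) (h3 : 3 ≤ S.card)
    (hdeg : ∀ v ∈ S, S.card ≤ 2 * (S ∩ G.neighborFinset v).card) :
    ∃ l : List V, l.Nodup ∧ l.toFinset = S ∧ SRSCyc G l := by
  classical
  set P : List V → Prop := fun t => t.Nodup ∧ t.Chain' G.Adj ∧ ∀ v ∈ t, v ∈ S with hP
  obtain ⟨v0, hv0⟩ : S.Nonempty := Finset.card_pos.1 (by omega)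
  have hKne : ∃ k, k ∈ {k | ∃ t, P t ∧ t.length = k} :=
    ⟨1, [v0], ⟨by simp, List.isChain_singleton _, by simpa using hv0⟩, rfl⟩
  have hbdd : BddAbove {k | ∃ t, P t ∧ t.length = k} := by
    refine ⟨S.card, ?_⟩
    rintro k ⟨t, ⟨hnd, _, hsub⟩, rfl⟩
    rw [← List.toFinset_card_of_nodup hnd]
    exact Finset.card_le_card (fun x hx => hsub x (List.mem_toFinset.1 hx))
  obtain ⟨l, hlP, hlen⟩ := Nat.sSup_mem (Set.nonempty_def.2 hKne) hbdd
  set k' := sSup {k | ∃ t, P t ∧ t.length = k} with hk'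
  have hmax : ∀ t, P t → t.length ≤ k' := fun t ht => le_csSup hbdd ⟨t, ht, rfl⟩
  have h1K : 1 ≤ k' := le_csSup hbdd ⟨[v0], ⟨by simp, List.isChain_singleton _, by simpa using hv0⟩, rfl⟩
  have hlne : l ≠ [] := by
    rw [← List.length_pos_iff]; omega
  have hclose : ∀ (t : List V), P t → t.length = k' → ∀ (hne : t ≠ []) (w : V),
      w ∈ S → G.Adj (t.head hne) w → w ∈ t := by
    intro t ht htlen hne w hw hadj
    by_contra hwt
    have hPw : P (w :: t) := by
      refine ⟨List.nodup_cons.2 ⟨hwt, ht.1⟩, List.isChain_cons.2 ⟨?_, ht.2.1⟩, ?_⟩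
      · intro y hy
        rw [List.head?_eq_head hne] at hy
        cases hy
        exact hadj.symm
      · intro v hv
        rcases List.mem_cons.1 hv with rfl | hv
        · exact hw
        · exact ht.2.2 v hv
    have := hmax _ hPw
    simp only [List.length_cons, htlen] at this
    omega
  have hrevP : P l.reverse := by
    refine ⟨List.nodup_reverse.2 hlP.1, ?_, fun v hv => hlP.2.2 v (List.mem_reverse.1 hv)⟩
    refine List.isChain_reverse.2 ?_
    exact hlP.2.1.imp (fun a b h => h.symm)
  have hsubS : ∀ v ∈ l, v ∈ S := hlP.2.2
  have haS : l.head hlne ∈ S := hsubS _ (List.head_mem hlne)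
  have hzS : l.getLast hlne ∈ S := hsubS _ (List.getLast_mem hlne)
  have hNa : ∀ w ∈ S, G.Adj (l.head hlne) w → w ∈ l := fun w hw hadj =>
    hclose l hlP hlen hlne w hw hadj
  have hNz : ∀ w ∈ S, G.Adj (l.getLast hlne) w → w ∈ l := by
    intro w hw hadj
    have hrne : l.reverse ≠ [] := by simpa using hlne
    have := hclose l.reverse hrevP (by simpa using hlen) hrne w hw
      (by rwa [List.head_reverse])
    exact List.mem_reverse.1 this
  have hkS : l.length ≤ S.card := by
    rw [← List.toFinset_card_of_nodup hlP.1]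
    exact Finset.card_le_card (fun x hx => hsubS x (List.mem_toFinset.1 hx))
  have hlsubS : l.toFinset ⊆ S := fun x hx => hsubS x (List.mem_toFinset.1 hx)
  -- A and B index sets
  have hcardA : (S ∩ G.neighborFinset (l.head hlne)).card ≤
      ((Finset.range (l.length - 1)).filter
        (fun i => G.Adj (l.head hlne) (l.getD (i+1) v0))).card := by
    apply Finset.card_le_card_of_injOn (fun w => l.idxOf w - 1)
    · intro w hw
      simp only [Finset.mem_coe] at hw ⊢
      rw [Finset.mem_inter, SimpleGraph.mem_neighborFinset] at hw
      have hwl : w ∈ l := hNa w hw.1 hw.2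
      have hidx : l.idxOf w < l.length := List.idxOf_lt_length_iff.2 hwl
      have hgw : l.get ⟨l.idxOf w, hidx⟩ = w := List.idxOf_get hidx
      have hwa : w ≠ l.head hlne := fun h => G.ne_of_adj hw.2 h.symm
      have hidx0 : l.idxOf w ≠ 0 := by
        intro h0
        apply hwa
        rw [← hgw, srs_get_congr l hidx h0, List.get_mk_zero]
      rw [Finset.mem_filter, Finset.mem_range]
      refine ⟨by omega, ?_⟩
      have h5 : l.idxOf w - 1 + 1 = l.idxOf w := by omega
      rw [h5, List.getD_eq_get l v0 ⟨_, hidx⟩, hgw]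
      exact hw.2
    · intro w hw w' hw' heq
      simp only [Finset.coe_inter, Set.mem_inter_iff, Finset.mem_coe,
        SimpleGraph.mem_neighborFinset] at hw hw'
      have hwl : w ∈ l := hNa w hw.1 hw.2
      have hwl' : w' ∈ l := hNa w' hw'.1 hw'.2
      have hidx : l.idxOf w < l.length := List.idxOf_lt_length_iff.2 hwl
      have hidx' : l.idxOf w' < l.length := List.idxOf_lt_length_iff.2 hwl'
      have h0 : l.idxOf w ≠ 0 := by
        intro h0
        have hth : w = l.head hlne := by
          rw [← List.idxOf_get hidx, srs_get_congr l hidx h0, List.get_mk_zero]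
        exact G.ne_of_adj hw.2 hth.symm
      have h0' : l.idxOf w' ≠ 0 := by
        intro h0
        have hth : w' = l.head hlne := by
          rw [← List.idxOf_get hidx', srs_get_congr l hidx' h0, List.get_mk_zero]
        exact G.ne_of_adj hw'.2 hth.symm
      have heq' : l.idxOf w - 1 = l.idxOf w' - 1 := heq
      have : l.idxOf w = l.idxOf w' := by omega
      rw [← List.idxOf_get hidx, ← List.idxOf_get hidx', srs_get_congr l hidx this]
  have hcardB : (S ∩ G.neighborFinset (l.getLast hlne)).card ≤
      ((Finset.range (l.length - 1)).filter
        (fun i => G.Adj (l.getLast hlne) (l.getD i v0))).card := by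
    apply Finset.card_le_card_of_injOn (fun w => l.idxOf w)
    · intro w hw
      simp only [Finset.mem_coe] at hw ⊢
      rw [Finset.mem_inter, SimpleGraph.mem_neighborFinset] at hw
      have hwl : w ∈ l := hNz w hw.1 hw.2
      have hidx : l.idxOf w < l.length := List.idxOf_lt_length_iff.2 hwl
      have hgw : l.get ⟨l.idxOf w, hidx⟩ = w := List.idxOf_get hidx
      have hwz : w ≠ l.getLast hlne := fun h => G.ne_of_adj hw.2 h.symm
      have hidxl : l.idxOf w ≠ l.length - 1 := by
        intro h0
        apply hwz
        rw [← hgw, srs_get_congr l hidx h0, List.getLast_eq_getElem]; rfl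
      rw [Finset.mem_filter, Finset.mem_range]
      refine ⟨by omega, ?_⟩
      rw [List.getD_eq_get l v0 ⟨_, hidx⟩, hgw]
      exact hw.2
    · intro w hw w' hw' heq
      simp only [Finset.coe_inter, Set.mem_inter_iff, Finset.mem_coe,
        SimpleGraph.mem_neighborFinset] at hw hw'
      have hwl : w ∈ l := hNz w hw.1 hw.2
      have hwl' : w' ∈ l := hNz w' hw'.1 hw'.2
      have hidx : l.idxOf w < l.length := List.idxOf_lt_length_iff.2 hwl
      have hidx' : l.idxOf w' < l.length := List.idxOf_lt_length_iff.2 hwl'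
      rw [← List.idxOf_get hidx, ← List.idxOf_get hidx', srs_get_congr l hidx heq]
  -- pigeonhole for the crossing
  have hsum : S.card ≤ (S ∩ G.neighborFinset (l.head hlne)).card +
      (S ∩ G.neighborFinset (l.getLast hlne)).card := by
    have := hdeg _ haS
    have := hdeg _ hzS
    omega
  obtain ⟨i, hiAB⟩ : ∃ i, i ∈ ((Finset.range (l.length - 1)).filter
        (fun i => G.Adj (l.head hlne) (l.getD (i+1) v0))) ∩
      ((Finset.range (l.length - 1)).filter
        (fun i => G.Adj (l.getLast hlne) (l.getD i v0))) := by
    by_contra hno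
    push_neg at hno
    have hdisj : ((Finset.range (l.length - 1)).filter
        (fun i => G.Adj (l.head hlne) (l.getD (i+1) v0))) ∩
      ((Finset.range (l.length - 1)).filter
        (fun i => G.Adj (l.getLast hlne) (l.getD i v0))) = ∅ :=
      Finset.eq_empty_of_forall_notMem hno
    have hun := Finset.card_inter_add_card_union
      ((Finset.range (l.length - 1)).filter
        (fun i => G.Adj (l.head hlne) (l.getD (i+1) v0)))
      ((Finset.range (l.length - 1)).filter
        (fun i => G.Adj (l.getLast hlne) (l.getD i v0)))
    rw [hdisj] at hun
    have hsubr : ((Finset.range (l.length - 1)).filter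
        (fun i => G.Adj (l.head hlne) (l.getD (i+1) v0))) ∪
      ((Finset.range (l.length - 1)).filter
        (fun i => G.Adj (l.getLast hlne) (l.getD i v0))) ⊆ Finset.range (l.length - 1) :=
      Finset.union_subset (Finset.filter_subset _ _) (Finset.filter_subset _ _)
    have := Finset.card_le_card hsubr
    rw [Finset.card_range] at this
    have hpos : 0 < l.length := List.length_pos_iff.2 hlne
    simp only [Finset.card_empty] at hun
    omega
  rw [Finset.mem_inter, Finset.mem_filter, Finset.mem_filter, Finset.mem_range] at hiAB
  obtain ⟨⟨hir, hiA⟩, _, hiB⟩ := hiAB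
  have hi1 : i + 1 < l.length := by omega
  have hA' : G.Adj (l.get ⟨0, by omega⟩) (l.get ⟨i+1, hi1⟩) := by
    rw [List.get_mk_zero]
    rwa [List.getD_eq_get l v0 ⟨_, hi1⟩] at hiA
  have hB' : G.Adj (l.getLast (by rintro rfl; simp at hi1)) (l.get ⟨i, by omega⟩) := by
    rwa [List.getD_eq_get l v0 ⟨_, (by omega : i < l.length)⟩] at hiB
  have hcyc : SRSCyc G (l.take (i+1) ++ (l.drop (i+1)).reverse) :=
    srs_cross hlP.2.1 hi1 hA' hB'
  have hperm : (l.take (i+1) ++ (l.drop (i+1)).reverse).Perm l := srs_cross_perm l i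
  have hcnodup : (l.take (i+1) ++ (l.drop (i+1)).reverse).Nodup := hperm.nodup_iff.2 hlP.1
  have hctf : (l.take (i+1) ++ (l.drop (i+1)).reverse).toFinset = l.toFinset :=
    Finset.ext (fun x => by
      simp only [List.mem_toFinset]
      exact ⟨fun h => hperm.mem_iff.1 h, fun h => hperm.mem_iff.2 h⟩)
  have hclen : (l.take (i+1) ++ (l.drop (i+1)).reverse).length = l.length :=
    hperm.length_eq
  -- if not spanning, extend
  have hspan : l.toFinset = S := by
    by_contra hne
    obtain ⟨w, hwS, hwl⟩ := Finset.exists_of_ssubset (lt_of_le_of_ne hlsubS hne)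
    -- w has a neighbor on l
    have hexu : ∃ u ∈ l, G.Adj w u := by
      by_contra hnou
      push_neg at hnou
      have hsub2 : S ∩ G.neighborFinset w ⊆ S \ (insert w l.toFinset) := by
        intro x hx
        rw [Finset.mem_inter, SimpleGraph.mem_neighborFinset] at hx
        rw [Finset.mem_sdiff, Finset.mem_insert]
        refine ⟨hx.1, ?_⟩
        rintro (rfl | hxl)
        · exact G.ne_of_adj hx.2 rfl
        · exact hnou x (List.mem_toFinset.1 hxl) hx.2
      have hc2 := Finset.card_le_card hsub2
      have hc3 : (S \ insert w l.toFinset).card = S.card - (insert w l.toFinset).card := by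
        apply Finset.card_sdiff_of_subset
        intro x hx
        rw [Finset.mem_insert] at hx
        rcases hx with rfl | hx
        · exact hwS
        · exact hlsubS hx
      have hc4 : (insert w l.toFinset).card = l.toFinset.card + 1 := by
        rw [Finset.card_insert_of_notMem (fun h => hwl h)]
      have hc5 : l.toFinset.card = l.length := List.toFinset_card_of_nodup hlP.1
      -- l contains all S-neighbors of head plus head itself
      have hsub3 : insert (l.head hlne) (S ∩ G.neighborFinset (l.head hlne)) ⊆
          l.toFinset := by
        intro x hx
        rw [Finset.mem_insert] at hx
        rcases hx with rfl | hx
        · exact List.mem_toFinset.2 (List.head_mem hlne)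
        · rw [Finset.mem_inter, SimpleGraph.mem_neighborFinset] at hx
          exact List.mem_toFinset.2 (hNa x hx.1 hx.2)
      have hc6 := Finset.card_le_card hsub3
      have hc7 : (insert (l.head hlne) (S ∩ G.neighborFinset (l.head hlne))).card =
          (S ∩ G.neighborFinset (l.head hlne)).card + 1 := by
        apply Finset.card_insert_of_notMem
        intro h
        rw [Finset.mem_inter, SimpleGraph.mem_neighborFinset] at h
        exact G.ne_of_adj h.2 rfl
      have hd1 := hdeg _ haS
      have hd2 := hdeg _ hwS
      omega
    obtain ⟨u, hul, hwu⟩ := hexu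
    have huc : u ∈ (l.take (i+1) ++ (l.drop (i+1)).reverse) := hperm.mem_iff.2 hul
    have hjlt : (l.take (i+1) ++ (l.drop (i+1)).reverse).idxOf u <
        (l.take (i+1) ++ (l.drop (i+1)).reverse).length := List.idxOf_lt_length_iff.2 huc
    set c := l.take (i+1) ++ (l.drop (i+1)).reverse with hcdef
    set j := c.idxOf u with hjdef
    have hrot : SRSCyc G (c.rotate j) := hcyc.rotate j
    have hrotlen : (c.rotate j).length = c.length := c.length_rotate j
    have hrotne : c.rotate j ≠ [] := by
      rw [← List.length_pos_iff, hrotlen, hclen]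
      omega
    have hrothead : (c.rotate j).head hrotne = u := by
      rw [← List.get_mk_zero (by rw [hrotlen]; omega)]
      rw [List.get_rotate]
      have hmod : (0 + j) % c.length = j := by
        rw [Nat.zero_add]
        exact Nat.mod_eq_of_lt hjlt
      rw [srs_get_congr c _ hmod]
      exact List.idxOf_get hjlt
    have hPext : P (w :: c.rotate j) := by
      refine ⟨List.nodup_cons.2 ⟨?_, List.nodup_rotate.2 hcnodup⟩,
        List.isChain_cons.2 ⟨?_, hrot.chain'⟩, ?_⟩
      · intro hmem
        exact hwl (List.mem_toFinset.2 (hperm.mem_iff.1 (List.mem_rotate.1 hmem)))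
      · intro y hy
        rw [List.head?_eq_head hrotne] at hy
        cases hy
        rw [hrothead]
        exact hwu
      · intro v hv
        rcases List.mem_cons.1 hv with rfl | hv
        · exact hwS
        · exact hsubS v (hperm.mem_iff.1 (List.mem_rotate.1 hv))
    have := hmax _ hPext
    simp only [List.length_cons, hrotlen, hclen, hlen] at this
    omega
  exact ⟨l.take (i+1) ++ (l.drop (i+1)).reverse, hcnodup, by rw [hctf, hspan], hcyc⟩

lemma srs_walk_of_chain (G : SimpleGraph V) : ∀ (a : V) (t : List V), List.Chain G.Adj a t →
    ∃ (b : V) (p : G.Walk a b), p.support = a :: t ∧ (a :: t).getLast (by simp) = b := by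
  intro a t
  induction t generalizing a with
  | nil => exact fun _ => ⟨a, SimpleGraph.Walk.nil, by simp, by simp⟩
  | cons c t ih =>
    intro h
    replace h := (List.chain_cons (R := G.Adj)).1 h
    obtain ⟨b, p, hs, hl⟩ := ih c h.2
    exact ⟨b, SimpleGraph.Walk.cons h.1 p, by simp [hs],
      by rw [List.getLast_cons (by simp), hl]⟩

lemma srs_ham_path (G : SimpleGraph V) [DecidableRel G.Adj] (S : Finset V) (a b : V)
    (ha : a ∉ S) (hb : b ∉ S) (hab : a ≠ b) (h3 : 3 ≤ S.card)
    (hdeg : ∀ v ∈ S, S.card ≤ 2 * (S ∩ G.neighborFinset v).card)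
    (hNab : S.card < (S ∩ G.neighborFinset a).card + (S ∩ G.neighborFinset b).card) :
    ∃ p : G.Walk a b, p.IsPath ∧ ∀ x, x ∈ p.support ↔ (x ∈ S ∨ x = a ∨ x = b) := by
  classical
  obtain ⟨l, hnd, htf, hcyc⟩ := srs_dirac G S h3 hdeg
  have hlenS : l.length = S.card := by
    rw [← List.toFinset_card_of_nodup hnd, htf]
  have hpos : 0 < l.length := by omega
  have hlne : l ≠ [] := by rw [← List.length_pos_iff]; omega
  have hmemS : ∀ x, x ∈ l ↔ x ∈ S := fun x => by
    rw [← htf, List.mem_toFinset]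
  -- index sets
  have hcardA : (S ∩ G.neighborFinset a).card ≤
      ((Finset.range l.length).filter (fun i => G.Adj a (l.getD i a))).card := by
    apply Finset.card_le_card_of_injOn (fun w => l.idxOf w)
    · intro w hw
      simp only [Finset.mem_coe] at hw ⊢
      rw [Finset.mem_inter, SimpleGraph.mem_neighborFinset] at hw
      have hwl : w ∈ l := (hmemS w).2 hw.1
      have hidx : l.idxOf w < l.length := List.idxOf_lt_length_iff.2 hwl
      rw [Finset.mem_filter, Finset.mem_range]
      exact ⟨hidx, by rw [List.getD_eq_get l a ⟨_, hidx⟩, List.idxOf_get hidx]; exact hw.2⟩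
    · intro w hw w' hw' heq
      simp only [Finset.coe_inter, Set.mem_inter_iff, Finset.mem_coe,
        SimpleGraph.mem_neighborFinset] at hw hw'
      have hidx : l.idxOf w < l.length := List.idxOf_lt_length_iff.2 ((hmemS w).2 hw.1)
      have hidx' : l.idxOf w' < l.length := List.idxOf_lt_length_iff.2 ((hmemS w').2 hw'.1)
      rw [← List.idxOf_get hidx, ← List.idxOf_get hidx', srs_get_congr l hidx heq]
  have hcardB : (S ∩ G.neighborFinset b).card ≤
      ((Finset.range l.length).filter
        (fun i => G.Adj b (l.getD ((i+1) % l.length) a))).card := by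
    apply Finset.card_le_card_of_injOn (fun w => (l.idxOf w + (l.length - 1)) % l.length)
    · intro w hw
      simp only [Finset.mem_coe] at hw ⊢
      rw [Finset.mem_inter, SimpleGraph.mem_neighborFinset] at hw
      have hwl : w ∈ l := (hmemS w).2 hw.1
      have hidx : l.idxOf w < l.length := List.idxOf_lt_length_iff.2 hwl
      rw [Finset.mem_filter, Finset.mem_range]
      refine ⟨Nat.mod_lt _ hpos, ?_⟩
      have hkey : ((l.idxOf w + (l.length - 1)) % l.length + 1) % l.length
          = l.idxOf w := by
        rw [Nat.mod_add_mod]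
        have : l.idxOf w + (l.length - 1) + 1 = l.idxOf w + l.length := by omega
        rw [this, Nat.add_mod_right]
        exact Nat.mod_eq_of_lt hidx
      rw [hkey, List.getD_eq_get l a ⟨_, hidx⟩, List.idxOf_get hidx]
      exact hw.2
    · intro w hw w' hw' heq
      simp only [Finset.coe_inter, Set.mem_inter_iff, Finset.mem_coe,
        SimpleGraph.mem_neighborFinset] at hw hw'
      have hidx : l.idxOf w < l.length := List.idxOf_lt_length_iff.2 ((hmemS w).2 hw.1)
      have hidx' : l.idxOf w' < l.length := List.idxOf_lt_length_iff.2 ((hmemS w').2 hw'.1)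
      have hrec : ∀ m : ℕ, m < l.length →
          ((m + (l.length - 1)) % l.length + 1) % l.length = m := by
        intro m hm
        rw [Nat.mod_add_mod]
        have : m + (l.length - 1) + 1 = m + l.length := by omega
        rw [this, Nat.add_mod_right]
        exact Nat.mod_eq_of_lt hm
      have : l.idxOf w = l.idxOf w' := by
        rw [← hrec _ hidx, ← hrec _ hidx']
        simp only at heq
        rw [heq]
      rw [← List.idxOf_get hidx, ← List.idxOf_get hidx', srs_get_congr l hidx this]
  obtain ⟨i, hiAB⟩ : ∃ i, i ∈ ((Finset.range l.length).filter
      (fun i => G.Adj a (l.getD i a))) ∩ ((Finset.range l.length).filter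
      (fun i => G.Adj b (l.getD ((i+1) % l.length) a))) := by
    by_contra hno
    push_neg at hno
    have hdisj := Finset.eq_empty_of_forall_notMem hno
    have hun := Finset.card_inter_add_card_union
      ((Finset.range l.length).filter (fun i => G.Adj a (l.getD i a)))
      ((Finset.range l.length).filter (fun i => G.Adj b (l.getD ((i+1) % l.length) a)))
    rw [hdisj] at hun
    have hsubr := Finset.card_le_card (Finset.union_subset
      (Finset.filter_subset (fun i => G.Adj a (l.getD i a)) (Finset.range l.length))
      (Finset.filter_subset (fun i => G.Adj b (l.getD ((i+1) % l.length) a))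
        (Finset.range l.length)))
    rw [Finset.card_range] at hsubr
    simp only [Finset.card_empty] at hun
    omega
  rw [Finset.mem_inter, Finset.mem_filter, Finset.mem_filter, Finset.mem_range] at hiAB
  obtain ⟨⟨hir, hiA⟩, _, hiB⟩ := hiAB
  have hj : (i+1) % l.length < l.length := Nat.mod_lt _ hpos
  have hax : G.Adj a (l.get ⟨i, hir⟩) := by rwa [List.getD_eq_get l a ⟨_, hir⟩] at hiA
  have hby : G.Adj b (l.get ⟨(i+1) % l.length, hj⟩) := by
    rwa [List.getD_eq_get l a ⟨_, hj⟩] at hiB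
  have hxy : G.Adj (l.get ⟨i, hir⟩) (l.get ⟨(i+1) % l.length, hj⟩) := hcyc i hir
  -- rotate so that y is the head and x is the last
  set j := (i+1) % l.length with hjdef
  have hrot : SRSCyc G (l.rotate j) := hcyc.rotate j
  have hrotlen : (l.rotate j).length = l.length := l.length_rotate j
  have hrotne : l.rotate j ≠ [] := by rw [← List.length_pos_iff, hrotlen]; omega
  have hrothead : (l.rotate j).head hrotne = l.get ⟨j, hj⟩ := by
    rw [← List.get_mk_zero (by omega : 0 < (l.rotate j).length), List.get_rotate]
    exact srs_get_congr l _ (by rw [Nat.zero_add]; exact Nat.mod_eq_of_lt hj)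
  have hrotlast : (l.rotate j).getLast hrotne = l.get ⟨i, hir⟩ := by
    rw [List.getLast_eq_getElem]
    refine Eq.trans (List.get_rotate l j ⟨(l.rotate j).length - 1, by omega⟩) ?_
    apply srs_get_congr l
    show ((l.rotate j).length - 1 + j) % l.length = i
    rw [hrotlen, hjdef, Nat.add_mod_mod]
    have h9 : l.length - 1 + (i + 1) = i + l.length := by omega
    rw [h9, Nat.add_mod_right]
    exact Nat.mod_eq_of_lt hir
  have hrevne : (l.rotate j).reverse ≠ [] := by simpa using hrotne
  have hrch : (l.rotate j).reverse.Chain' G.Adj := by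
    refine List.isChain_reverse.2 ?_
    exact hrot.chain'.imp (fun u v h => h.symm)
  have hch2 : ((l.rotate j).reverse ++ [b]).Chain' G.Adj := by
    refine List.isChain_append.2 ?_
    refine ⟨hrch, by simp, ?_⟩
    intro u hu v hv
    rw [List.getLast?_eq_getLast hrevne, Option.mem_some_iff] at hu
    simp only [List.head?_cons, Option.mem_some_iff] at hv
    subst hu hv
    rw [List.getLast_reverse, hrothead]
    exact hby.symm
  have hch3 : ((l.rotate j).reverse ++ [b]).Chain' G.Adj ∧
      ∀ y ∈ ((l.rotate j).reverse ++ [b]).head?, G.Adj a y := by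
    refine ⟨hch2, ?_⟩
    intro y hy
    rw [List.head?_append_of_ne_nil _ hrevne, List.head?_eq_head hrevne,
      Option.mem_some_iff] at hy
    subst hy
    rw [List.head_reverse, hrotlast]
    exact hax
  have hchain : List.Chain G.Adj a ((l.rotate j).reverse ++ [b]) :=
    List.isChain_cons.2 ⟨hch3.2, hch3.1⟩
  obtain ⟨b', p, hsupp, hlast⟩ := srs_walk_of_chain G a ((l.rotate j).reverse ++ [b]) hchain
  have hb' : b' = b := by
    rw [← hlast, List.getLast_cons (by simp),
      List.getLast_append_of_ne_nil (h₂ := (by simp : ([b] : List V) ≠ []))]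
    rfl
  have hsupp' : (p.copy rfl hb').support = a :: ((l.rotate j).reverse ++ [b]) := by
    rw [SimpleGraph.Walk.support_copy, hsupp]
  have hmemrot : ∀ x, x ∈ l.rotate j ↔ x ∈ S := fun x =>
    (List.mem_rotate).trans (hmemS x)
  have hnodupL : (a :: ((l.rotate j).reverse ++ [b])).Nodup := by
    rw [List.nodup_cons, List.nodup_append]
    refine ⟨?_, List.nodup_reverse.2 (List.nodup_rotate.2 hnd), by simp, ?_⟩
    · intro hmem
      rcases List.mem_append.1 hmem with hm | hm
      · exact ha ((hmemrot a).1 (List.mem_reverse.1 hm))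
      · exact hab (by simpa using hm)
    · intro x hx
      simp only [List.mem_singleton, forall_eq]
      intro hxb
      subst hxb
      exact hb ((hmemrot x).1 (List.mem_reverse.1 hx))
  refine ⟨p.copy rfl hb', SimpleGraph.Walk.IsPath.mk' (by rw [hsupp']; exact hnodupL), ?_⟩
  intro x
  rw [hsupp']
  simp only [List.mem_cons, List.mem_append, List.mem_reverse, List.mem_singleton, List.not_mem_nil, or_false]
  constructor
  · rintro (rfl | hm | rfl)
    · exact Or.inr (Or.inl rfl)
    · exact Or.inl ((hmemrot x).1 hm)
    · exact Or.inr (Or.inr rfl)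
  · rintro (hm | rfl | rfl)
    · exact Or.inr (Or.inl ((hmemrot x).2 hm))
    · exact Or.inl rfl
    · exact Or.inr (Or.inr rfl)

end GraphMachinery

lemma srs_two_step {V : Type} {G : SimpleGraph V} {u v : V} (x y : V) (hxy : x = y)
    (h1 : G.Adj u x) (h2 : G.Adj x v) (h1' : G.Adj u y) (h2' : G.Adj y v) :
    (SimpleGraph.Walk.cons h1 (SimpleGraph.Walk.cons h2 SimpleGraph.Walk.nil)) =
    (SimpleGraph.Walk.cons h1' (SimpleGraph.Walk.cons h2' SimpleGraph.Walk.nil)) := by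
  subst hxy; rfl

lemma srs_two_step_reverse {V : Type} {G : SimpleGraph V} {u v x : V}
    (h1 : G.Adj u x) (h2 : G.Adj x v) :
    (SimpleGraph.Walk.cons h1 (SimpleGraph.Walk.cons h2 SimpleGraph.Walk.nil)).reverse =
    SimpleGraph.Walk.cons h2.symm (SimpleGraph.Walk.cons h1.symm SimpleGraph.Walk.nil) := by
  rfl

/-- `IsSpanningSubdivisionWith G H f` says that `G` contains a spanning subdivision of `H`
whose branch vertices are given by the injective map `f`: for every edge `ij` of `H` there
is a path in `G` from `f i` to `f j`, these paths are pairwise internally disjoint, their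
interiors avoid all branch vertices, and together they cover every vertex of `G`. -/
def IsSpanningSubdivisionWith {V W : Type*} (G : SimpleGraph V) (H : SimpleGraph W)
    (f : W → V) : Prop :=
  Function.Injective f ∧
  ∃ P : ∀ i j : W, H.Adj i j → G.Walk (f i) (f j),
    (∀ i j (h : H.Adj i j), (P i j h).IsPath) ∧
    (∀ i j (h : H.Adj i j), P j i h.symm = (P i j h).reverse) ∧
    (∀ i j k l (h : H.Adj i j) (h' : H.Adj k l), s(i, j) ≠ s(k, l) →
      ∀ x, x ∈ (P i j h).support → x ∈ (P k l h').support →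
        (x = f i ∨ x = f j) ∧ (x = f k ∨ x = f l)) ∧
    (∀ i j (h : H.Adj i j) (k : W), f k ∈ (P i j h).support → k = i ∨ k = j) ∧
    (∀ x : V, (∃ i j, ∃ h : H.Adj i j, x ∈ (P i j h).support) ∨ ∃ i, x = f i)

/-- `G` contains a spanning subdivision of `H`. -/
def IsSpanningSubdivisionIn {V W : Type*} (G : SimpleGraph V) (H : SimpleGraph W) : Prop :=
  ∃ f : W → V, IsSpanningSubdivisionWith G H f

/-- **Main theorem.** For every `ε > 0` there is `C₀` such that for all `C ≥ C₀`, `n ≥ 2`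
and `log n ≤ d < n`, every graph on `N = C·d·n` vertices with minimum degree at least
`(1+ε)N/2` contains a spanning subdivision of every `n`-vertex `d`-regular graph. -/
theorem spanning_regular_subdivision :
    ∀ ε : ℝ, 0 < ε → ∃ C₀ : ℕ, 0 < C₀ ∧ ∀ C : ℕ, C₀ ≤ C → ∀ n : ℕ, 2 ≤ n →
      ∀ d : ℕ, Real.log n ≤ (d : ℝ) → d < n →
      ∀ (V : Type) [Fintype V] (G : SimpleGraph V) [DecidableRel G.Adj],
        Fintype.card V = C * d * n →
        (∀ v : V, (1 + ε) * (Fintype.card V : ℝ) / 2 ≤ (G.degree v : ℝ)) →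
        ∀ (H : SimpleGraph (Fin n)) [DecidableRel H.Adj], H.IsRegularOfDegree d →
          IsSpanningSubdivisionIn G H := by
  intro ε hε
  set ε' : ℝ := min ε 1 with hε'def
  have hε'pos : 0 < ε' := lt_min hε one_pos
  have hε'le : ε' ≤ ε := min_le_left _ _
  refine ⟨⌈(16:ℝ)/ε'⌉₊ + 17, by omega, ?_⟩
  intro C hC n hn d hlog hdn V _ G _ hcard hdeg H _ hreg
  classical
  -- basic numerics
  have hd1 : 1 ≤ d := by
    by_contra hd0
    push_neg at hd0
    interval_cases d
    · have h2 : (0:ℝ) < Real.log n := Real.log_pos (by exact_mod_cast (by omega : 1 < n))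
      simp at hlog
      linarith
  have hC17 : 17 ≤ C := by omega
  set N := Fintype.card V with hNdef
  have hN : N = C * d * n := hcard
  set m := H.edgeFinset.card with hmdef
  have hm2 : 2 * m = n * d := by
    have h1 := SimpleGraph.sum_degrees_eq_twice_card_edges H
    have h2 : ∑ v : Fin n, H.degree v = n * d := by
      rw [Finset.sum_congr rfl (fun v _ => hreg v), Finset.sum_const, Finset.card_univ,
        Fintype.card_fin, smul_eq_mul]
    omega
  have hnnd : n ≤ n * d := Nat.le_mul_of_pos_right n (by omega)
  have hNbig : 17 * (n * d) ≤ N := by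
    rw [hN]
    calc 17 * (n * d) ≤ C * (n * d) := Nat.mul_le_mul_right _ hC17
      _ = C * d * n := by ring
  -- master degree bound
  have hmaster : ∀ v : V, N + 8 * (n * d) ≤ 2 * G.degree v := by
    intro v
    have h1 := hdeg v
    have h2 : (1 + ε') * (N:ℝ) / 2 ≤ G.degree v := by
      refine le_trans ?_ h1
      have hN0 : (0:ℝ) ≤ (N:ℝ) := Nat.cast_nonneg _
      nlinarith [hN0, hε'le]
    have hCreal : (16:ℝ) / ε' ≤ C := by
      calc (16:ℝ)/ε' ≤ ⌈(16:ℝ)/ε'⌉₊ := Nat.le_ceil _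
        _ ≤ C := by exact_mod_cast (by omega : (⌈(16:ℝ)/ε'⌉₊ ≤ C))
    have hεC : 16 ≤ ε' * C := by
      rw [div_le_iff₀ hε'pos] at hCreal
      linarith
    have hNr : (N:ℝ) = (C:ℝ) * d * n := by exact_mod_cast congrArg Nat.cast hN
    have h3 : (N:ℝ) + 8 * (n * d) ≤ 2 * G.degree v := by
      have hε'N : 8 * ((n:ℝ) * d) ≤ ε' * N := by
        rw [hNr]
        have hdn0 : (0:ℝ) ≤ (d:ℝ) * n := by positivity
        calc 8 * ((n:ℝ) * d) ≤ 16 * ((d:ℝ) * n) := by nlinarith [hdn0]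
          _ ≤ (ε' * C) * ((d:ℝ) * n) := by nlinarith [hdn0]
          _ = ε' * ((C:ℝ) * d * n) := by ring
      nlinarith [h2]
    exact_mod_cast h3
  -- common neighborhoods are large
  have hcommon : ∀ u v : V, n + m + 1 ≤ (G.neighborFinset u ∩ G.neighborFinset v).card := by
    intro u v
    have h1 := Finset.card_inter_add_card_union (G.neighborFinset u) (G.neighborFinset v)
    have h2 : (G.neighborFinset u ∪ G.neighborFinset v).card ≤ N :=
      Finset.card_le_univ _
    have h3 : (G.neighborFinset u).card = G.degree u := rfl
    have h4 : (G.neighborFinset v).card = G.degree v := rfl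
    have h5 := hmaster u
    have h6 := hmaster v
    omega
  -- the branch vertex embedding
  have hnN : n ≤ N := by omega
  obtain ⟨f⟩ : Nonempty (Fin n ↪ V) :=
    Function.Embedding.nonempty_iff_card_le.2 (by rwa [Fintype.card_fin])
  set F : Finset V := Finset.univ.image f with hFdef
  have hFcard : F.card = n := by
    rw [hFdef, Finset.card_image_of_injective _ f.injective, Finset.card_univ,
      Fintype.card_fin]
  have hmemF : ∀ x, x ∈ F ↔ ∃ k, f k = x := by
    intro x
    simp [hFdef]
  -- a distinguished edge
  have hn0 : 0 < n := by omega
  set i₀ : Fin n := ⟨0, hn0⟩ with hi₀def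
  have hdegi₀ : 0 < (H.neighborFinset i₀).card := by
    rw [SimpleGraph.card_neighborFinset_eq_degree, hreg i₀]; omega
  obtain ⟨j₀, hj₀mem⟩ := Finset.card_pos.1 hdegi₀
  have h₀ : H.Adj i₀ j₀ := (SimpleGraph.mem_neighborFinset _ _ _).1 hj₀mem
  have he₀ : s(i₀, j₀) ∈ H.edgeFinset := SimpleGraph.mem_edgeFinset.2 h₀
  -- choose internal vertices for the short paths
  have hchoose : ∀ s : Finset (Sym2 (Fin n)), s ⊆ H.edgeFinset →
      ∃ g : Sym2 (Fin n) → V, (Set.InjOn g s) ∧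
        ∀ e ∈ s, g e ∉ F ∧ ∀ i : Fin n, i ∈ e → G.Adj (f i) (g e) := by
    intro s
    induction s using Finset.induction_on with
    | empty => exact fun _ => ⟨fun _ => f i₀, by simp [Set.InjOn], by simp⟩
    | @insert e s he ih =>
      intro hsub
      obtain ⟨g, hinj, hprop⟩ := ih (fun x hx => hsub (Finset.mem_insert_of_mem hx))
      have heE : e ∈ H.edgeFinset := hsub (Finset.mem_insert_self _ _)
      have hscard : s.card + 1 ≤ m := by
        rw [← Finset.card_insert_of_notMem he]
        exact Finset.card_le_card hsub
      revert he heE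
      induction e using Sym2.inductionOn with
      | hf i j =>
        intro he heE
        have hfresh : ¬ (G.neighborFinset (f i) ∩ G.neighborFinset (f j) ⊆
            F ∪ s.image g) := by
          intro hss
          have h1 := Finset.card_le_card hss
          have h2 : (F ∪ s.image g).card ≤ n + s.card := by
            calc (F ∪ s.image g).card ≤ F.card + (s.image g).card :=
                Finset.card_union_le _ _
              _ ≤ n + s.card := by
                have := Finset.card_image_le (s := s) (f := g)
                omega
          have := hcommon (f i) (f j)
          omega
        obtain ⟨y, hy1, hy2⟩ := Finset.not_subset.1 hfresh
        rw [Finset.mem_inter, SimpleGraph.mem_neighborFinset,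
          SimpleGraph.mem_neighborFinset] at hy1
        rw [Finset.mem_union, not_or] at hy2
        refine ⟨Function.update g s(i,j) y, ?_, ?_⟩
        · intro x hx x' hx' heq
          simp only [Finset.coe_insert, Set.mem_insert_iff, Finset.mem_coe] at hx hx'
          rcases hx with rfl | hx <;> rcases hx' with rfl | hx'
          · rfl
          · exfalso
            rw [Function.update_self, Function.update_of_ne (by rintro rfl; exact he hx')]
              at heq
            exact hy2.2 (Finset.mem_image.2 ⟨x', hx', heq.symm⟩)
          · exfalso
            rw [Function.update_self, Function.update_of_ne (by rintro rfl; exact he hx)]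
              at heq
            exact hy2.2 (Finset.mem_image.2 ⟨x, hx, heq⟩)
          · rw [Function.update_of_ne (by rintro rfl; exact he hx),
              Function.update_of_ne (by rintro rfl; exact he hx')] at heq
            exact hinj hx hx' heq
        · intro e' he'
          rcases Finset.mem_insert.1 he' with rfl | he'
          · rw [Function.update_self]
            refine ⟨hy2.1, ?_⟩
            intro v hv
            rcases Sym2.mem_iff.1 hv with rfl | rfl
            · exact hy1.1
            · exact hy1.2
          · rw [Function.update_of_ne (by rintro rfl; exact he he')]
            exact hprop e' he'
  obtain ⟨g, hginj, hgprop⟩ := hchoose (H.edgeFinset.erase s(i₀, j₀))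
    (Finset.erase_subset _ _)
  set X : Finset V := (H.edgeFinset.erase s(i₀, j₀)).image g with hXdef
  have hXcard : X.card = m - 1 := by
    rw [hXdef, Finset.card_image_of_injOn hginj, Finset.card_erase_of_mem he₀]
  have hXF : ∀ x ∈ X, x ∉ F := by
    intro x hx
    obtain ⟨e, he, rfl⟩ := Finset.mem_image.1 hx
    exact (hgprop e he).1
  set S : Finset V := (Finset.univ \ F) \ X with hSdef
  have hmemS : ∀ x, x ∈ S ↔ (x ∉ F ∧ x ∉ X) := by
    intro x
    simp [hSdef]
  have hScard : S.card = N - n - (m - 1) := by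
    rw [hSdef, Finset.card_sdiff_of_subset (fun x hx => by
      rw [Finset.mem_sdiff]
      exact ⟨Finset.mem_univ _, hXF x hx⟩)]
    rw [Finset.card_sdiff_of_subset (Finset.subset_univ _), Finset.card_univ, hFcard, hXcard]
  have hSNdeg : ∀ v : V, G.degree v ≤ (S ∩ G.neighborFinset v).card + (N - S.card) := by
    intro v
    have hsub : G.neighborFinset v ⊆ (S ∩ G.neighborFinset v) ∪ (Finset.univ \ S) := by
      intro x hx
      by_cases hxS : x ∈ S
      · exact Finset.mem_union.2 (Or.inl (Finset.mem_inter.2 ⟨hxS, hx⟩))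
      · exact Finset.mem_union.2 (Or.inr (Finset.mem_sdiff.2 ⟨Finset.mem_univ _, hxS⟩))
    calc G.degree v = (G.neighborFinset v).card := rfl
      _ ≤ ((S ∩ G.neighborFinset v) ∪ (Finset.univ \ S)).card := Finset.card_le_card hsub
      _ ≤ (S ∩ G.neighborFinset v).card + (Finset.univ \ S).card := Finset.card_union_le _ _
      _ = (S ∩ G.neighborFinset v).card + (N - S.card) := by
        rw [Finset.card_sdiff_of_subset (Finset.subset_univ _), Finset.card_univ]
  have h3S : 3 ≤ S.card := by omega
  have hdegS : ∀ v ∈ S, S.card ≤ 2 * (S ∩ G.neighborFinset v).card := by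
    intro v _
    have := hSNdeg v
    have := hmaster v
    omega
  have hab : f i₀ ≠ f j₀ := fun hfe => h₀.ne (f.injective hfe)
  have haS : f i₀ ∉ S := fun hs => ((hmemS _).1 hs).1 ((hmemF _).2 ⟨i₀, rfl⟩)
  have hbS : f j₀ ∉ S := fun hs => ((hmemS _).1 hs).1 ((hmemF _).2 ⟨j₀, rfl⟩)
  have hNab : S.card < (S ∩ G.neighborFinset (f i₀)).card +
      (S ∩ G.neighborFinset (f j₀)).card := by
    have h1 := hSNdeg (f i₀)
    have h2 := hSNdeg (f j₀)
    have h3 := hmaster (f i₀)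
    have h4 := hmaster (f j₀)
    omega
  obtain ⟨W, hWpath, hWsupp⟩ := srs_ham_path G S (f i₀) (f j₀) haS hbS hab h3S hdegS hNab
  -- helper facts
  have hkeyerase : ∀ (i j : Fin n), H.Adj i j → ¬(i = i₀ ∧ j = j₀) → ¬(i = j₀ ∧ j = i₀) →
      s(i,j) ∈ H.edgeFinset.erase s(i₀,j₀) := by
    intro i j h hc hc'
    rw [Finset.mem_erase]
    refine ⟨?_, SimpleGraph.mem_edgeFinset.2 h⟩
    intro heq
    rcases Sym2.eq_iff.1 heq with ⟨h1, h2⟩ | ⟨h1, h2⟩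
    · exact hc ⟨h1, h2⟩
    · exact hc' ⟨h1, h2⟩
  have hgadj1 : ∀ (i j : Fin n) (h : H.Adj i j), ¬(i = i₀ ∧ j = j₀) → ¬(i = j₀ ∧ j = i₀) →
      G.Adj (f i) (g s(i,j)) := fun i j h hc hc' =>
    (hgprop _ (hkeyerase i j h hc hc')).2 i (Sym2.mem_iff.2 (Or.inl rfl))
  have hgadj2 : ∀ (i j : Fin n) (h : H.Adj i j), ¬(i = i₀ ∧ j = j₀) → ¬(i = j₀ ∧ j = i₀) →
      G.Adj (g s(i,j)) (f j) := fun i j h hc hc' =>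
    ((hgprop _ (hkeyerase i j h hc hc')).2 j (Sym2.mem_iff.2 (Or.inr rfl))).symm
  have hgnF : ∀ (i j : Fin n), H.Adj i j → ¬(i = i₀ ∧ j = j₀) → ¬(i = j₀ ∧ j = i₀) →
      g s(i,j) ∉ F := fun i j h hc hc' => (hgprop _ (hkeyerase i j h hc hc')).1
  have hgX : ∀ (i j : Fin n), H.Adj i j → ¬(i = i₀ ∧ j = j₀) → ¬(i = j₀ ∧ j = i₀) →
      g s(i,j) ∈ X := fun i j h hc hc' =>
    Finset.mem_image.2 ⟨s(i,j), hkeyerase i j h hc hc', rfl⟩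
  have hfF : ∀ k : Fin n, f k ∈ F := fun k => (hmemF _).2 ⟨k, rfl⟩
  have hXS : ∀ x ∈ X, x ∉ S := fun x hx hs => ((hmemS x).1 hs).2 hx
  have hFS : ∀ x ∈ F, x ∉ S := fun x hx hs => ((hmemS x).1 hs).1 hx
  -- the path system
  set P : ∀ i j : Fin n, H.Adj i j → G.Walk (f i) (f j) := fun i j h =>
    if hc : i = i₀ ∧ j = j₀ then W.copy (by rw [hc.1]) (by rw [hc.2])
    else if hc' : i = j₀ ∧ j = i₀ then W.reverse.copy (by rw [hc'.1]) (by rw [hc'.2])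
    else SimpleGraph.Walk.cons (hgadj1 i j h hc hc')
      (SimpleGraph.Walk.cons (hgadj2 i j h hc hc') SimpleGraph.Walk.nil) with hPdef
  have hPcase : ∀ (i j : Fin n) (h : H.Adj i j),
      (s(i,j) = s(i₀,j₀) ∧
        (∀ x, x ∈ (P i j h).support ↔ (x ∈ S ∨ x = f i₀ ∨ x = f j₀)))
    ∨ (s(i,j) ≠ s(i₀,j₀) ∧ (P i j h).support = [f i, g s(i,j), f j]) := by
    intro i j h
    by_cases hc : i = i₀ ∧ j = j₀
    · left
      refine ⟨by rw [hc.1, hc.2], fun x => ?_⟩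
      rw [hPdef]
      simp only []
      rw [dif_pos hc, SimpleGraph.Walk.support_copy]
      exact hWsupp x
    · by_cases hc' : i = j₀ ∧ j = i₀
      · left
        refine ⟨by rw [hc'.1, hc'.2]; exact Sym2.eq_swap, fun x => ?_⟩
        rw [hPdef]
        simp only []
        rw [dif_neg hc, dif_pos hc', SimpleGraph.Walk.support_copy,
          SimpleGraph.Walk.support_reverse, List.mem_reverse]
        exact hWsupp x
      · right
        refine ⟨(Finset.mem_erase.1 (hkeyerase i j h hc hc')).1, ?_⟩
        rw [hPdef]
        simp only []
        rw [dif_neg hc, dif_neg hc']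
        simp [SimpleGraph.Walk.support_cons]
  -- condition 1: paths
  have hcond1 : ∀ i j (h : H.Adj i j), (P i j h).IsPath := by
    intro i j h
    by_cases hc : i = i₀ ∧ j = j₀
    · rw [hPdef]
      simp only []
      rw [dif_pos hc]
      exact (SimpleGraph.Walk.isPath_copy _ _ _).2 hWpath
    · by_cases hc' : i = j₀ ∧ j = i₀
      · rw [hPdef]
        simp only []
        rw [dif_neg hc, dif_pos hc']
        exact (SimpleGraph.Walk.isPath_copy _ _ _).2 hWpath.reverse
      · rcases hPcase i j h with ⟨heq, _⟩ | ⟨_, hsupp⟩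
        · exfalso
          rcases Sym2.eq_iff.1 heq with ⟨h1, h2⟩ | ⟨h1, h2⟩
          · exact hc ⟨h1, h2⟩
          · exact hc' ⟨h1, h2⟩
        · apply SimpleGraph.Walk.IsPath.mk'
          rw [hsupp]
          have h1 : f i ≠ g s(i,j) := fun he => hgnF i j h hc hc' (he ▸ hfF i)
          have h2 : f j ≠ g s(i,j) := fun he => hgnF i j h hc hc' (he ▸ hfF j)
          have h3 : f i ≠ f j := fun he => h.ne (f.injective he)
          simp [h1, h2, h3, h1.symm, h2.symm]
  -- condition 2: reversal
  have hcond2 : ∀ i j (h : H.Adj i j), P j i h.symm = (P i j h).reverse := by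
    intro i j h
    by_cases hc : i = i₀ ∧ j = j₀
    · rw [hPdef]
      simp only []
      rw [dif_pos hc, dif_neg (fun hx => h₀.ne (hc.1.symm.trans hx.2)),
        dif_pos ⟨hc.2, hc.1⟩, SimpleGraph.Walk.reverse_copy]
    · by_cases hc' : i = j₀ ∧ j = i₀
      · rw [hPdef]
        simp only []
        rw [dif_neg hc, dif_pos hc', dif_pos ⟨hc'.2, hc'.1⟩,
          SimpleGraph.Walk.reverse_copy, SimpleGraph.Walk.reverse_reverse]
      · rw [hPdef]
        simp only []
        rw [dif_neg hc, dif_neg hc', dif_neg (fun hx => hc' ⟨hx.2, hx.1⟩),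
          dif_neg (fun hx => hc ⟨hx.2, hx.1⟩), srs_two_step_reverse]
        exact srs_two_step _ _ (congrArg g Sym2.eq_swap) _ _ _ _
  -- membership helper for short supports
  have hshortmem : ∀ (i j : Fin n) (x : V), x ∈ ([f i, g s(i,j), f j] : List V) ↔
      (x = f i ∨ x = g s(i,j) ∨ x = f j) := by
    intro i j x
    simp
  -- condition 3: internal disjointness
  have hcond3 : ∀ i j k l (h : H.Adj i j) (h' : H.Adj k l), s(i, j) ≠ s(k, l) →
      ∀ x, x ∈ (P i j h).support → x ∈ (P k l h').support →
        (x = f i ∨ x = f j) ∧ (x = f k ∨ x = f l) := by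
    intro i j k l h h' hne x hx hx'
    have hmape : ∀ (i' j' : Fin n), s(i',j') = s(i₀,j₀) →
        ∀ y, (y = f i₀ ∨ y = f j₀) → (y = f i' ∨ y = f j') := by
      intro i' j' heq y hy
      rcases Sym2.eq_iff.1 heq with ⟨h1, h2⟩ | ⟨h1, h2⟩
      · rw [h1, h2]; exact hy
      · rw [h1, h2]; exact hy.symm
    rcases hPcase i j h with ⟨heq1, hs1⟩ | ⟨hne1, hs1⟩ <;>
      rcases hPcase k l h' with ⟨heq2, hs2⟩ | ⟨hne2, hs2⟩
    · exact absurd (heq1.trans heq2.symm) hne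
    · -- long (i,j), short (k,l)
      rw [hs1] at hx
      rw [hs2, hshortmem] at hx'
      have hgX' : g s(k,l) ∈ X := Finset.mem_image.2 ⟨s(k,l),
        Finset.mem_erase.2 ⟨hne2, SimpleGraph.mem_edgeFinset.2 h'⟩, rfl⟩
      have hxF : x = f i₀ ∨ x = f j₀ := by
        rcases hx with hxS | hxab
        · exfalso
          rcases hx' with rfl | rfl | rfl
          · exact hFS _ (hfF k) hxS
          · exact hXS _ hgX' hxS
          · exact hFS _ (hfF l) hxS
        · exact hxab
      refine ⟨hmape i j heq1 x hxF, ?_⟩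
      rcases hx' with rfl | rfl | rfl
      · exact Or.inl rfl
      · exfalso
        rcases hxF with he | he
        · exact hXF _ hgX' (he ▸ hfF i₀)
        · exact hXF _ hgX' (he ▸ hfF j₀)
      · exact Or.inr rfl
    · -- short (i,j), long (k,l)
      rw [hs2] at hx'
      rw [hs1, hshortmem] at hx
      have hgX' : g s(i,j) ∈ X := Finset.mem_image.2 ⟨s(i,j),
        Finset.mem_erase.2 ⟨hne1, SimpleGraph.mem_edgeFinset.2 h⟩, rfl⟩
      have hxF : x = f i₀ ∨ x = f j₀ := by
        rcases hx' with hxS | hxab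
        · exfalso
          rcases hx with rfl | rfl | rfl
          · exact hFS _ (hfF i) hxS
          · exact hXS _ hgX' hxS
          · exact hFS _ (hfF j) hxS
        · exact hxab
      refine ⟨?_, hmape k l heq2 x hxF⟩
      rcases hx with rfl | rfl | rfl
      · exact Or.inl rfl
      · exfalso
        rcases hxF with he | he
        · exact hXF _ hgX' (he ▸ hfF i₀)
        · exact hXF _ hgX' (he ▸ hfF j₀)
      · exact Or.inr rfl
    · -- short/short
      rw [hs1, hshortmem] at hx
      rw [hs2, hshortmem] at hx'
      have hgg : g s(i,j) ≠ g s(k,l) := by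
        intro hgeq
        exact hne (hginj (Finset.mem_coe.2 (Finset.mem_erase.2
            ⟨hne1, SimpleGraph.mem_edgeFinset.2 h⟩))
          (Finset.mem_coe.2 (Finset.mem_erase.2
            ⟨hne2, SimpleGraph.mem_edgeFinset.2 h'⟩)) hgeq)
      have hg1F : g s(i,j) ∉ F := by
        obtain ⟨e', he', hge⟩ : ∃ e' ∈ H.edgeFinset.erase s(i₀,j₀), g e' = g s(i,j) :=
          ⟨s(i,j), Finset.mem_erase.2 ⟨hne1, SimpleGraph.mem_edgeFinset.2 h⟩, rfl⟩
        exact hge ▸ (hgprop e' he').1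
      have hg2F : g s(k,l) ∉ F := by
        obtain ⟨e', he', hge⟩ : ∃ e' ∈ H.edgeFinset.erase s(i₀,j₀), g e' = g s(k,l) :=
          ⟨s(k,l), Finset.mem_erase.2 ⟨hne2, SimpleGraph.mem_edgeFinset.2 h'⟩, rfl⟩
        exact hge ▸ (hgprop e' he').1
      constructor
      · rcases hx with rfl | rfl | rfl
        · exact Or.inl rfl
        · exfalso
          rcases hx' with he | he | he
          · exact hg1F (he ▸ hfF k)
          · exact hgg he
          · exact hg1F (he ▸ hfF l)
        · exact Or.inr rfl
      · rcases hx' with rfl | rfl | rfl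
        · exact Or.inl rfl
        · exfalso
          rcases hx with he | he | he
          · exact hg2F (he ▸ hfF i)
          · exact hgg he.symm
          · exact hg2F (he ▸ hfF j)
        · exact Or.inr rfl
  -- condition 4: branch vertices only at the ends
  have hcond4 : ∀ i j (h : H.Adj i j) (k : Fin n), f k ∈ (P i j h).support →
      k = i ∨ k = j := by
    intro i j h k hk
    rcases hPcase i j h with ⟨heq, hs⟩ | ⟨hne1, hs⟩
    · rw [hs] at hk
      have hk' : f k = f i₀ ∨ f k = f j₀ := by
        rcases hk with hkS | hkab
        · exact absurd hkS (hFS _ (hfF k))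
        · exact hkab
      have : k = i₀ ∨ k = j₀ := by
        rcases hk' with he | he
        · exact Or.inl (f.injective he)
        · exact Or.inr (f.injective he)
      rcases Sym2.eq_iff.1 heq with ⟨h1, h2⟩ | ⟨h1, h2⟩
      · rw [h1, h2]; exact this
      · rw [h1, h2]; exact this.symm
    · rw [hs, hshortmem] at hk
      have hg1F : g s(i,j) ∉ F := by
        obtain ⟨e', he', hge⟩ : ∃ e' ∈ H.edgeFinset.erase s(i₀,j₀), g e' = g s(i,j) :=
          ⟨s(i,j), Finset.mem_erase.2 ⟨hne1, SimpleGraph.mem_edgeFinset.2 h⟩, rfl⟩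
        exact hge ▸ (hgprop e' he').1
      rcases hk with he | he | he
      · exact Or.inl (f.injective he)
      · exact absurd (he ▸ hfF k) hg1F
      · exact Or.inr (f.injective he)
  -- condition 5: covering
  have hrep : ∀ e ∈ H.edgeFinset, ∃ (i : Fin n) (j : Fin n) (h : H.Adj i j), e = s(i,j) := by
    intro e
    induction e using Sym2.inductionOn with
    | hf i j =>
      intro he
      exact ⟨i, j, SimpleGraph.mem_edgeFinset.1 he, rfl⟩
  have hcond5 : ∀ x : V, (∃ i j, ∃ h : H.Adj i j, x ∈ (P i j h).support) ∨ ∃ i, x = f i := by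
    intro x
    by_cases hxF : x ∈ F
    · right
      obtain ⟨k, hk⟩ := (hmemF x).1 hxF
      exact ⟨k, hk.symm⟩
    · left
      by_cases hxX : x ∈ X
      · obtain ⟨e, he, rfl⟩ := Finset.mem_image.1 hxX
        have heE : e ∈ H.edgeFinset := Finset.mem_of_mem_erase he
        obtain ⟨i, j, h, rfl⟩ := hrep e heE
        refine ⟨i, j, h, ?_⟩
        rcases hPcase i j h with ⟨heq, _⟩ | ⟨_, hs⟩
        · exact absurd heq (Finset.mem_erase.1 he).1
        · rw [hs, hshortmem]
          exact Or.inr (Or.inl rfl)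
      · have hxS : x ∈ S := (hmemS x).2 ⟨hxF, hxX⟩
        refine ⟨i₀, j₀, h₀, ?_⟩
        rcases hPcase i₀ j₀ h₀ with ⟨_, hs⟩ | ⟨hne1, _⟩
        · exact (hs x).2 (Or.inl hxS)
        · exact absurd rfl hne1
  exact ⟨⇑f, f.injective, P, hcond1, hcond2, hcond3, hcond4, hcond5⟩
end

section
/- Let 1/C ≪ δ < α and n ≥ 2. Suppose log n ≤ d < n and G is a graph on N = C·d·n vertices with minimum degree δ(G) ≥ αN. Then for every d-regular graph H on vertex set [n], G admits an (H, α-δ)-good partition, i.e., a partition V(G) = V₁ ∪ ... ∪ V_n into parts of equal size m = Cd such that δ(G[V_i]) ≥ (α-δ)m for all i, and δ(G[V_i, V_j]) ≥ (α-δ)m for every edge ij of H. -/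
lemma gp_core (δ α m n s : ℝ) (hδ : 0 < δ) (hδα : δ < α) (hα : α < 1) (hn : 2 ≤ n)
    (hm : 8 ≤ δ * m) (hs1 : δ * m / 2 ≤ s) (hs2 : s ≤ α * m) :
    (1+δ/4) * (α*m - s + 1) * ((1-α)*m*(n-1) - s + 1) ≤ (α*m*(n-1) + s) * ((1-α)*m + s) := by
  have hm0 : 0 < m := by nlinarith
  have hδ1 : δ < 1 := by linarith
  have hα0 : 0 < α := by linarith
  have hs4 : 4 ≤ s := by nlinarith
  have hsm : s ≤ m := by nlinarith
  have h1 : 0 ≤ s - 1 - δ*m/4 := by linarith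
  have h2 : 0 ≤ m*n - δ*m/4 := by nlinarith
  have e1 : 0 ≤ α*m := by positivity
  have e2 : 0 ≤ (1-α)*m*(n-1) := by
    apply mul_nonneg (mul_nonneg (by linarith) hm0.le); linarith
  have e3 : 0 ≤ α*m*(n-1) := by
    apply mul_nonneg e1; linarith
  have e4 : 0 ≤ (1-α)*m := mul_nonneg (by linarith) hm0.le
  nlinarith [mul_nonneg h1 h2,
    mul_nonneg (by linarith : (0:ℝ) ≤ s - 1) (by linarith : (0:ℝ) ≤ m - (s-1)),
    mul_nonneg (sq_nonneg (1 - 2*α)) (mul_nonneg (mul_nonneg hδ.le (mul_pos hm0 hm0).le) (by linarith : (0:ℝ) ≤ n - 1)),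
    mul_nonneg (mul_nonneg (by linarith : (0:ℝ) ≤ δ) (by linarith : (0:ℝ) ≤ s - 1)) (by linarith : (0:ℝ) ≤ α*m + (1-α)*m*(n-1)),
    mul_nonneg (by linarith : (0:ℝ) ≤ s - 1) (by linarith : (0:ℝ) ≤ α*m*(n-1) + (1-α)*m), e1, e2, e3, e4]

lemma gp_num (δ α m n k D N : ℝ) (hδ : 0 < δ) (hδα : δ < α) (hα : α < 1) (hn : 2 ≤ n)
    (hm : 8 ≤ δ * m) (hN : N = m*n) (hD1 : α*N ≤ D) (hD2 : D ≤ N)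
    (hk0 : 0 ≤ k) (hk : k ≤ (α - δ/2)*m) :
    (1+δ/4) * ((k+1) * (N - D - m + k + 1)) ≤ (D - k)*(m - k) := by
  have hm0 : 0 < m := by nlinarith
  set s : ℝ := α*m - k with hs
  have hs1 : δ * m / 2 ≤ s := by simp only [hs]; nlinarith
  have hs2 : s ≤ α * m := by simp only [hs]; linarith
  have core := gp_core δ α m n s hδ hδα hα hn hm hs1 hs2
  have hmk : 0 ≤ m - k := by nlinarith
  have h1 : (1+δ/4) * ((k+1) * (N - D - m + k + 1)) ≤ (1+δ/4) * ((k+1) * (N - α*N - m + k + 1)) := by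
    apply mul_le_mul_of_nonneg_left _ (by linarith)
    apply mul_le_mul_of_nonneg_left _ (by linarith)
    linarith
  have h2 : (α*N - k)*(m - k) ≤ (D - k)*(m - k) := by
    apply mul_le_mul_of_nonneg_right _ hmk; linarith
  have e1 : N - α*N - m + k + 1 = (1-α)*m*(n-1) - s + 1 := by rw [hN, hs]; ring
  have e2 : k + 1 = α*m - s + 1 := by rw [hs]; ring
  have e3 : α*N - k = α*m*(n-1) + s := by rw [hN, hs]; ring
  have e4 : m - k = (1-α)*m + s := by rw [hs]; ring
  calc (1+δ/4) * ((k+1) * (N - D - m + k + 1)) 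
      ≤ (1+δ/4) * ((k+1) * (N - α*N - m + k + 1)) := h1
    _ = (1+δ/4) * (α*m - s + 1) * ((1-α)*m*(n-1) - s + 1) := by rw [e1, e2]; ring
    _ ≤ (α*m*(n-1) + s) * ((1-α)*m + s) := core
    _ = (α*N - k)*(m - k) := by rw [e3, e4]
    _ ≤ (D - k)*(m - k) := h2

lemma gp_step (δ α : ℝ) (m n k D N : ℕ) (hδ : 0 < δ) (hδα : δ < α) (hα : α < 1)
    (hn : 2 ≤ n) (hm : 8 ≤ δ * m) (hN : N = m*n) (hD1 : α*N ≤ (D:ℝ)) (hD2 : D ≤ N)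
    (hk : (k:ℝ) ≤ (α - δ/2)*m) :
    (1+δ/4) * (D.choose k * (N-D).choose (m-k) : ℝ) ≤ (D.choose (k+1) * (N-D).choose (m-(k+1)) : ℝ) := by
  have hm0R : (0:ℝ) < m := by nlinarith
  have hn2 : (2:ℝ) ≤ (n:ℝ) := by exact_mod_cast hn
  have hmn : (m:ℝ) ≤ N := by rw [hN]; push_cast; nlinarith
  have hkm : k < m := by
    have : (k:ℝ) < m := by nlinarith
    exact_mod_cast this
  have hkD : k < D := by
    have : (k:ℝ) < D := by nlinarith
    exact_mod_cast this
  by_cases hc : N - D < m - k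
  · have : (N-D).choose (m-k) = 0 := Nat.choose_eq_zero_of_lt hc
    rw [this]
    simp
    positivity
  · push_neg at hc
    -- nat identity
    have hmk1 : m - (k+1) + 1 = m - k := by omega
    have i1 : D.choose (k+1) * (k+1) = D.choose k * (D - k) := Nat.choose_succ_right_eq D k
    have i2 : (N-D).choose (m-k) * (m-k) = (N-D).choose (m-(k+1)) * ((N-D) - (m-(k+1))) := by
      rw [← hmk1]; exact Nat.choose_succ_right_eq (N-D) (m-(k+1))
    have key : (D.choose (k+1) * (N-D).choose (m-(k+1))) * ((k+1) * ((N-D) - (m-k-1)))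
        = (D.choose k * (N-D).choose (m-k)) * ((D-k) * (m-k)) := by
      have : m - k - 1 = m - (k+1) := by omega
      rw [this]
      calc (D.choose (k+1) * (N-D).choose (m-(k+1))) * ((k+1) * ((N-D) - (m-(k+1))))
          = (D.choose (k+1) * (k+1)) * ((N-D).choose (m-(k+1)) * ((N-D) - (m-(k+1)))) := by ring
        _ = (D.choose k * (D-k)) * ((N-D).choose (m-k) * (m-k)) := by rw [i1, ← i2]
        _ = (D.choose k * (N-D).choose (m-k)) * ((D-k) * (m-k)) := by ring
    -- cast to ℝ
    have hDN : D ≤ N := hD2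
    have c1 : ((D - k : ℕ) : ℝ) = (D:ℝ) - k := by push_cast [Nat.cast_sub hkD.le]; ring
    have c2 : ((m - k : ℕ) : ℝ) = (m:ℝ) - k := by push_cast [Nat.cast_sub hkm.le]; ring
    have hmk1' : 1 ≤ m - k := by omega
    have c3 : (((N-D) - (m-k-1) : ℕ) : ℝ) = (N:ℝ) - D - m + k + 1 := by
      have h1 : m - k - 1 ≤ N - D := by omega
      rw [Nat.cast_sub h1, Nat.cast_sub hDN]
      have : ((m - k - 1 : ℕ) : ℝ) = (m:ℝ) - k - 1 := by
        rw [Nat.cast_sub (by omega : 1 ≤ m - k), Nat.cast_sub hkm.le]; push_cast; ring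
      rw [this]; ring
    have keyR : (D.choose (k+1) * (N-D).choose (m-(k+1)) : ℝ) * ((k+1) * ((N:ℝ) - D - m + k + 1))
        = (D.choose k * (N-D).choose (m-k) : ℝ) * (((D:ℝ)-k) * ((m:ℝ)-k)) := by
      have := congrArg (fun x : ℕ => (x:ℝ)) key
      push_cast [c1, c2, c3] at this
      rw [c1, c2, c3] at *
      push_cast at this ⊢
      linarith [this]
    have num := gp_num δ α m n k D N hδ hδα hα (by exact_mod_cast hn) hm (by rw [hN]; push_cast; ring)
      hD1 (by exact_mod_cast hD2) (Nat.cast_nonneg k) hk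
    have hpos : (0:ℝ) < (k+1) * ((N:ℝ) - D - m + k + 1) := by
      apply mul_pos (by positivity)
      have : (m:ℝ) - k ≤ (N:ℝ) - D := by
        have := hc
        have h : ((m - k : ℕ):ℝ) ≤ ((N - D : ℕ):ℝ) := by exact_mod_cast hc
        rw [Nat.cast_sub hDN, Nat.cast_sub hkm.le] at h
        linarith
      linarith
    have hf0 : (0:ℝ) ≤ (D.choose k * (N-D).choose (m-k) : ℝ) := by positivity
    rw [← sub_nonneg]
    have expand : (D.choose (k+1) * (N-D).choose (m-(k+1)) : ℝ) - (1+δ/4) * (D.choose k * (N-D).choose (m-k) : ℝ)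
        = ((D.choose k * (N-D).choose (m-k) : ℝ) * (((D:ℝ)-k) * ((m:ℝ)-k))
          - (1+δ/4) * (D.choose k * (N-D).choose (m-k) : ℝ) * ((k+1) * ((N:ℝ) - D - m + k + 1)))
          / ((k+1) * ((N:ℝ) - D - m + k + 1)) := by
      rw [← keyR]; rw [eq_div_iff hpos.ne']; ring
    rw [expand]
    apply div_nonneg _ hpos.le
    rw [sub_nonneg]
    calc (1+δ/4) * (D.choose k * (N-D).choose (m-k) : ℝ) * ((k+1) * ((N:ℝ) - D - m + k + 1))
        = (D.choose k * (N-D).choose (m-k) : ℝ) * ((1+δ/4) * ((k+1) * ((N:ℝ) - D - m + k + 1))) := by ring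
      _ ≤ (D.choose k * (N-D).choose (m-k) : ℝ) * (((D:ℝ)-k) * ((m:ℝ)-k)) := by
          apply mul_le_mul_of_nonneg_left num hf0


lemma gp_vdm (m k D N : ℕ) (hk : k ≤ m) (hDN : D ≤ N) :
    D.choose k * (N-D).choose (m-k) ≤ N.choose m := by
  have hN : D + (N - D) = N := by omega
  have hsum : N.choose m = ∑ ij ∈ Finset.HasAntidiagonal.antidiagonal m, D.choose ij.1 * (N-D).choose ij.2 := by
    rw [← hN, Nat.add_choose_eq]
    simp [Nat.add_sub_cancel_left]
  rw [hsum]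
  exact Finset.single_le_sum (f := fun ij => D.choose ij.1 * (N-D).choose ij.2)
    (fun i _ => Nat.zero_le _) (a := (k, m-k))
    (by rw [Finset.HasAntidiagonal.mem_antidiagonal]; omega)

lemma gp_iter (δ α : ℝ) (m n D N : ℕ) (hδ : 0 < δ) (hδα : δ < α) (hα : α < 1)
    (hn : 2 ≤ n) (hm : 8 ≤ δ * m) (hN : N = m*n) (hD1 : α*N ≤ (D:ℝ)) (hD2 : D ≤ N)
    (k L : ℕ) (hkL : (k:ℝ) + L ≤ (α - δ/2)*m + 1) :
    (1+δ/4)^L * (D.choose k * (N-D).choose (m-k) : ℝ)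
      ≤ (D.choose (k+L) * (N-D).choose (m-(k+L)) : ℝ) := by
  induction L with
  | zero => simp
  | succ L ih =>
    have hL : (k:ℝ) + L ≤ (α - δ/2)*m + 1 := by push_cast at hkL ⊢; linarith
    have hkL' : ((k + L : ℕ):ℝ) ≤ (α - δ/2)*m := by push_cast at hkL ⊢; linarith
    have step := gp_step δ α m n (k+L) D N hδ hδα hα hn hm hN hD1 hD2 hkL'
    have h0 : (0:ℝ) ≤ 1 + δ/4 := by linarith
    calc (1+δ/4)^(L+1) * (D.choose k * (N-D).choose (m-k) : ℝ)
        = (1+δ/4) * ((1+δ/4)^L * (D.choose k * (N-D).choose (m-k) : ℝ)) := by ring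
      _ ≤ (1+δ/4) * (D.choose (k+L) * (N-D).choose (m-(k+L)) : ℝ) :=
          mul_le_mul_of_nonneg_left (ih hL) h0
      _ ≤ (D.choose (k+L+1) * (N-D).choose (m-(k+L+1)) : ℝ) := step
      _ = (D.choose (k+(L+1)) * (N-D).choose (m-(k+(L+1))) : ℝ) := by ring_nf

lemma gp_tail (δ α : ℝ) (m n D N : ℕ) (hδ : 0 < δ) (hδα : δ < α) (hα : α < 1)
    (hn : 2 ≤ n) (hm : 8 ≤ δ * m) (hN : N = m*n) (hD1 : α*N ≤ (D:ℝ)) (hD2 : D ≤ N)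
    (k : ℕ) (hk : (k:ℝ) ≤ (α - δ)*m) :
    (D.choose k * (N-D).choose (m-k) : ℝ) * (1+δ/4)^(⌊δ*m/4⌋₊) ≤ (N.choose m : ℝ) := by
  set L := ⌊δ*m/4⌋₊ with hL
  have hm0 : (0:ℝ) < m := by nlinarith
  have hLle : (L:ℝ) ≤ δ*m/4 := Nat.floor_le (by positivity)
  have hkL : (k:ℝ) + L ≤ (α - δ/2)*m + 1 := by nlinarith
  have hiter := gp_iter δ α m n D N hδ hδα hα hn hm hN hD1 hD2 k L hkL
  have hkLm : k + L ≤ m := by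
    have : ((k + L : ℕ):ℝ) ≤ (α - δ/2)*m := by push_cast; nlinarith
    have h2 : ((k + L : ℕ):ℝ) < m := by nlinarith
    exact_mod_cast h2.le
  have hvdm : (D.choose (k+L) * (N-D).choose (m-(k+L)) : ℝ) ≤ (N.choose m : ℝ) := by
    exact_mod_cast Nat.cast_le.2 (gp_vdm m (k+L) D N hkLm hD2)
  calc (D.choose k * (N-D).choose (m-k) : ℝ) * (1+δ/4)^L
      = (1+δ/4)^L * (D.choose k * (N-D).choose (m-k) : ℝ) := by ring
    _ ≤ (D.choose (k+L) * (N-D).choose (m-(k+L)) : ℝ) := hiter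
    _ ≤ (N.choose m : ℝ) := hvdm


lemma gp_fiber_sets {V : Type} [Fintype V] [DecidableEq V] (A : Finset V) (m k : ℕ)
    (p : Finset V → Prop) [DecidablePred p] :
    (((Finset.powersetCard m (Finset.univ : Finset V)).filter
        (fun S => p S ∧ (S ∩ A).card = k)).card)
      ≤ A.card.choose k * (Fintype.card V - A.card).choose (m-k) := by
  classical
  have := Finset.card_le_card_of_injOn (f := fun S => (S ∩ A, S \ A))
    (s := (Finset.powersetCard m (Finset.univ : Finset V)).filter (fun S => p S ∧ (S ∩ A).card = k))
    (t := Finset.powersetCard k A ×ˢ Finset.powersetCard (m-k) Aᶜ) ?_ ?_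
  · calc _ ≤ (Finset.powersetCard k A ×ˢ Finset.powersetCard (m-k) Aᶜ).card := this
      _ = A.card.choose k * (Fintype.card V - A.card).choose (m-k) := by
          rw [Finset.card_product, Finset.card_powersetCard, Finset.card_powersetCard,
            Finset.card_compl]
  · intro S hS
    simp only [Finset.mem_coe, Finset.mem_filter, Finset.mem_powersetCard] at hS ⊢
    obtain ⟨⟨_, hcard⟩, _, hk'⟩ := hS
    apply Finset.mk_mem_product
    · rw [Finset.mem_powersetCard]
      exact ⟨Finset.inter_subset_right, hk'⟩
    · rw [Finset.mem_powersetCard]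
      constructor
      · intro x hx
        simp only [Finset.mem_sdiff] at hx
        simp [hx.2]
      · have := Finset.card_inter_add_card_sdiff S A
        omega
  · intro S₁ h₁ S₂ h₂ h
    simp only [Prod.mk.injEq] at h
    have e1 : S₁ ∩ A ∪ S₁ \ A = S₁ := by ext x; simp; tauto
    have e2 : S₂ ∩ A ∪ S₂ \ A = S₂ := by ext x; simp; tauto
    rw [← e1, ← e2, h.1, h.2]

lemma gp_badsets (δ α : ℝ) (m n : ℕ) {V : Type} [Fintype V] [DecidableEq V]
    (A : Finset V) (p : Finset V → Prop) [DecidablePred p]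
    (hδ : 0 < δ) (hδα : δ < α) (hα : α < 1) (hn : 2 ≤ n) (hm : 8 ≤ δ * m)
    (hN : Fintype.card V = m*n) (hD1 : α*(Fintype.card V) ≤ (A.card:ℝ))
    (hp : ∀ S, p S → ((S ∩ A).card:ℝ) < (α-δ)*m) :
    ((((Finset.powersetCard m (Finset.univ : Finset V)).filter p).card : ℝ) * (1+δ/4)^(⌊δ*m/4⌋₊))
      ≤ (m+1) * ((Fintype.card V).choose m : ℝ) := by
  classical
  set N := Fintype.card V
  set D := A.card
  have hD2 : D ≤ N := Finset.card_le_univ A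
  set t := (Finset.range (m+1)).filter (fun k : ℕ => (k:ℝ) < (α-δ)*m) with ht
  have hfib : ((Finset.powersetCard m (Finset.univ : Finset V)).filter p).card
      = ∑ k ∈ t, (((Finset.powersetCard m (Finset.univ : Finset V)).filter p).filter
          (fun S => (S ∩ A).card = k)).card := by
    apply Finset.card_eq_sum_card_fiberwise
    intro S hS
    simp only [Finset.mem_coe, Finset.mem_filter, Finset.mem_powersetCard] at hS
    rw [ht, Finset.mem_coe, Finset.mem_filter, Finset.mem_range]
    beta_reduce
    constructor
    · have : (S ∩ A).card ≤ S.card := Finset.card_le_card Finset.inter_subset_left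
      omega
    · exact hp S hS.2
  have hfib2 : ∀ k, (((Finset.powersetCard m (Finset.univ : Finset V)).filter p).filter
          (fun S => (S ∩ A).card = k)).card ≤ D.choose k * (N - D).choose (m-k) := by
    intro k
    have : ((Finset.powersetCard m (Finset.univ : Finset V)).filter p).filter
          (fun S => (S ∩ A).card = k)
        = (Finset.powersetCard m (Finset.univ : Finset V)).filter
          (fun S => p S ∧ (S ∩ A).card = k) := by
      rw [Finset.filter_filter]
    rw [this]
    exact gp_fiber_sets A m k p
  have htail : ∀ k ∈ t, ((D.choose k * (N-D).choose (m-k) : ℕ) : ℝ) * (1+δ/4)^(⌊δ*m/4⌋₊)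
      ≤ (N.choose m : ℝ) := by
    intro k hk
    rw [ht, Finset.mem_filter] at hk
    have := gp_tail δ α m n D N hδ hδα hα hn hm hN hD1 hD2 k (le_of_lt hk.2)
    exact_mod_cast this
  have hcard_t : t.card ≤ m + 1 := by
    calc t.card ≤ (Finset.range (m+1)).card := Finset.card_filter_le _ _
      _ = m + 1 := Finset.card_range _
  calc (((Finset.powersetCard m (Finset.univ : Finset V)).filter p).card : ℝ) * (1+δ/4)^(⌊δ*m/4⌋₊)
      = (∑ k ∈ t, ((((Finset.powersetCard m (Finset.univ : Finset V)).filter p).filter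
          (fun S => (S ∩ A).card = k)).card : ℝ)) * (1+δ/4)^(⌊δ*m/4⌋₊) := by
        rw [hfib]; push_cast; ring
    _ ≤ (∑ k ∈ t, ((D.choose k * (N-D).choose (m-k) : ℕ) : ℝ)) * (1+δ/4)^(⌊δ*m/4⌋₊) := by
        apply mul_le_mul_of_nonneg_right _ (by positivity)
        apply Finset.sum_le_sum
        intro k _
        exact_mod_cast hfib2 k
    _ = ∑ k ∈ t, ((D.choose k * (N-D).choose (m-k) : ℕ) : ℝ) * (1+δ/4)^(⌊δ*m/4⌋₊) := by
        rw [Finset.sum_mul]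
    _ ≤ ∑ k ∈ t, (N.choose m : ℝ) := Finset.sum_le_sum htail
    _ = t.card * (N.choose m : ℝ) := by rw [Finset.sum_const]; push_cast; ring
    _ ≤ (m+1) * (N.choose m : ℝ) := by
        apply mul_le_mul_of_nonneg_right _ (by positivity)
        exact_mod_cast hcard_t



lemma gp_fiber_perm {W V : Type} [Fintype W] [DecidableEq W] [Fintype V] [DecidableEq V]
    (e : W ≃ V) (B : Finset W) (S : Finset V) (hBS : B.card = S.card) :
    (Finset.univ.filter (fun π : Equiv.Perm W => B.image (fun x => e (π x)) = S)).card
      ≤ B.card.factorial * (Fintype.card W - B.card).factorial := by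
  classical
  rw [← Fintype.card_subtype]
  have key : ∀ (π : Equiv.Perm W), B.image (fun x => e (π x)) = S →
      (∀ x, x ∈ B → e (π x) ∈ S) ∧ (∀ x, x ∉ B → e (π x) ∉ S) := by
    intro π hπ
    constructor
    · intro x hx; rw [← hπ]; exact Finset.mem_image_of_mem _ hx
    · intro x hx hmem
      rw [← hπ] at hmem
      obtain ⟨y, hy, hey⟩ := Finset.mem_image.1 hmem
      exact hx (by rwa [show y = x from π.injective (e.injective hey)] at hy)
  let Φ : {π : Equiv.Perm W // B.image (fun x => e (π x)) = S} →
      ({x // x ∈ B} ↪ {v // v ∈ S}) × ({x // x ∉ B} ↪ {v // v ∉ S}) :=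
    fun ⟨π, hπ⟩ =>
      (⟨fun x => ⟨e (π x.1), (key π hπ).1 x.1 x.2⟩, by
        intro a b hab
        exact Subtype.ext (π.injective (e.injective (by simpa using congrArg Subtype.val hab)))⟩,
       ⟨fun x => ⟨e (π x.1), (key π hπ).2 x.1 x.2⟩, by
        intro a b hab
        exact Subtype.ext (π.injective (e.injective (by simpa using congrArg Subtype.val hab)))⟩)
  have hΦ : Function.Injective Φ := by
    rintro ⟨π, hπ⟩ ⟨π', hπ'⟩ h
    simp only [Φ, Prod.mk.injEq] at h
    apply Subtype.ext
    ext x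
    have : e (π x) = e (π' x) := by
      by_cases hx : x ∈ B
      · have := congrArg (fun (f : {x // x ∈ B} ↪ {v // v ∈ S}) => (f ⟨x, hx⟩).1) h.1
        exact this
      · have := congrArg (fun (f : {x // x ∉ B} ↪ {v // v ∉ S}) => (f ⟨x, hx⟩).1) h.2
        exact this
    exact e.injective this
  have hcard := Fintype.card_le_of_injective Φ hΦ
  refine le_trans hcard ?_
  rw [Fintype.card_prod, Fintype.card_embedding_eq, Fintype.card_embedding_eq]
  have c1 : Fintype.card {x // x ∈ B} = B.card := Fintype.card_coe B
  have c2 : Fintype.card {v // v ∈ S} = S.card := Fintype.card_coe S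
  have c3 : Fintype.card {x // x ∉ B} = Fintype.card W - B.card := by
    rw [Fintype.card_subtype_compl, Fintype.card_coe]
  have c4 : Fintype.card {v // v ∉ S} = Fintype.card V - S.card := by
    rw [Fintype.card_subtype_compl, Fintype.card_coe]
  have hWV : Fintype.card W = Fintype.card V := Fintype.card_congr e
  rw [c1, c2, c3, c4, ← hBS, hWV, Nat.descFactorial_self, Nat.descFactorial_self]


lemma gp_badperms (δ α : ℝ) (m n : ℕ) {W V : Type} [Fintype W] [DecidableEq W]
    [Fintype V] [DecidableEq V] (e : W ≃ V) (B : Finset W) (A : Finset V)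
    (hδ : 0 < δ) (hδα : δ < α) (hα : α < 1) (hn : 2 ≤ n) (hm : 8 ≤ δ * m)
    (hN : Fintype.card V = m*n) (hD1 : α*(Fintype.card V) ≤ (A.card:ℝ)) (hB : B.card = m) :
    ((Finset.univ.filter (fun π : Equiv.Perm W =>
        (((B.image (fun x => e (π x))) ∩ A).card : ℝ) < (α-δ)*m)).card : ℝ) * (1+δ/4)^(⌊δ*m/4⌋₊)
      ≤ (m+1) * ((Fintype.card V).choose m : ℝ)
          * (Nat.factorial m * Nat.factorial (Fintype.card V - m)) := by
  classical
  set p : Finset V → Prop := fun S => ((S ∩ A).card : ℝ) < (α-δ)*m with hp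
  set BadS := (Finset.powersetCard m (Finset.univ : Finset V)).filter p with hBadS
  have hinj : ∀ π : Equiv.Perm W, Function.Injective (fun x => e (π x)) :=
    fun π a b hab => π.injective (e.injective hab)
  have hWV : Fintype.card W = Fintype.card V := Fintype.card_congr e
  -- fiberwise decomposition
  have hfib : (Finset.univ.filter (fun π : Equiv.Perm W =>
        p (B.image (fun x => e (π x))))).card
      = ∑ S ∈ BadS, ((Finset.univ.filter (fun π : Equiv.Perm W =>
          p (B.image (fun x => e (π x))))).filter
          (fun π => B.image (fun x => e (π x)) = S)).card := by
    apply Finset.card_eq_sum_card_fiberwise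
    intro π hπ
    rw [Finset.mem_coe, Finset.mem_filter] at hπ
    rw [hBadS, Finset.mem_coe, Finset.mem_filter, Finset.mem_powersetCard]
    exact ⟨⟨Finset.subset_univ _, by rw [Finset.card_image_of_injective _ (hinj π), hB]⟩, hπ.2⟩
  have hfib2 : ∀ S ∈ BadS, ((Finset.univ.filter (fun π : Equiv.Perm W =>
          p (B.image (fun x => e (π x))))).filter
          (fun π => B.image (fun x => e (π x)) = S)).card
        ≤ Nat.factorial m * Nat.factorial (Fintype.card V - m) := by
    intro S hS
    have hsub : ((Finset.univ.filter (fun π : Equiv.Perm W =>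
          p (B.image (fun x => e (π x))))).filter
          (fun π => B.image (fun x => e (π x)) = S))
        ⊆ Finset.univ.filter (fun π : Equiv.Perm W => B.image (fun x => e (π x)) = S) := by
      intro π hπ
      simp only [Finset.mem_filter] at hπ ⊢
      exact ⟨Finset.mem_univ _, hπ.2⟩
    have hScard : S.card = m := by
      rw [hBadS, Finset.mem_filter, Finset.mem_powersetCard] at hS
      exact hS.1.2
    calc _ ≤ (Finset.univ.filter (fun π : Equiv.Perm W =>
          B.image (fun x => e (π x)) = S)).card := Finset.card_le_card hsub
      _ ≤ B.card.factorial * (Fintype.card W - B.card).factorial :=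
          gp_fiber_perm e B S (by rw [hB, hScard])
      _ = Nat.factorial m * Nat.factorial (Fintype.card V - m) := by rw [hB, hWV]
  have hcount : (Finset.univ.filter (fun π : Equiv.Perm W =>
        p (B.image (fun x => e (π x))))).card
      ≤ BadS.card * (Nat.factorial m * Nat.factorial (Fintype.card V - m)) := by
    rw [hfib]
    calc _ ≤ ∑ _S ∈ BadS, Nat.factorial m * Nat.factorial (Fintype.card V - m) :=
          Finset.sum_le_sum hfib2
      _ = BadS.card * (Nat.factorial m * Nat.factorial (Fintype.card V - m)) := by
          rw [Finset.sum_const, smul_eq_mul]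
  have hbadsets := gp_badsets δ α m n A p hδ hδα hα hn hm hN hD1 (fun S hS => hS)
  have hf0 : (0:ℝ) ≤ (Nat.factorial m * Nat.factorial (Fintype.card V - m) : ℕ) := by positivity
  calc ((Finset.univ.filter (fun π : Equiv.Perm W =>
        (((B.image (fun x => e (π x))) ∩ A).card : ℝ) < (α-δ)*m)).card : ℝ) * (1+δ/4)^(⌊δ*m/4⌋₊)
      ≤ ((BadS.card * (Nat.factorial m * Nat.factorial (Fintype.card V - m)) : ℕ) : ℝ)
          * (1+δ/4)^(⌊δ*m/4⌋₊) := by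
        apply mul_le_mul_of_nonneg_right _ (by positivity)
        exact_mod_cast hcount
    _ = ((BadS.card : ℝ) * (1+δ/4)^(⌊δ*m/4⌋₊))
          * ((Nat.factorial m * Nat.factorial (Fintype.card V - m) : ℕ) : ℝ) := by
        push_cast; ring
    _ ≤ ((m+1) * ((Fintype.card V).choose m : ℝ))
          * ((Nat.factorial m * Nat.factorial (Fintype.card V - m) : ℕ) : ℝ) := by
        apply mul_le_mul_of_nonneg_right hbadsets hf0
    _ = (m+1) * ((Fintype.card V).choose m : ℝ)
          * (Nat.factorial m * Nat.factorial (Fintype.card V - m)) := by push_cast; ring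



lemma gp_log_le (y : ℝ) (hy : 0 < y) : Real.log y ≤ 2 * Real.sqrt y := by
  have h1 : Real.log (Real.sqrt y) ≤ Real.sqrt y - 1 :=
    Real.log_le_sub_one_of_pos (Real.sqrt_pos.2 hy)
  have h2 : Real.log (Real.sqrt y) = Real.log y / 2 := Real.log_sqrt hy.le
  linarith [h2 ▸ h1]

lemma gp_exp_le (x : ℝ) (hx0 : 0 ≤ x) (hx1 : x ≤ 1) : Real.exp (x/2) ≤ 1 + x := by
  have h1 : 1 - x/2 ≤ Real.exp (-(x/2)) := by
    have := Real.add_one_le_exp (-(x/2)); linarith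
  have h2 : Real.exp (-(x/2)) = 1 / Real.exp (x/2) := by
    rw [Real.exp_neg]; ring
  have h3 : 0 < Real.exp (x/2) := Real.exp_pos _
  have h4 : (1 - x/2) * Real.exp (x/2) ≤ 1 := by
    rw [h2] at h1
    calc (1 - x/2) * Real.exp (x/2) ≤ (1 / Real.exp (x/2)) * Real.exp (x/2) :=
          mul_le_mul_of_nonneg_right h1 h3.le
      _ = 1 := by field_simp
  nlinarith [h3]

set_option maxHeartbeats 1000000 in
lemma gp_numeric (δ : ℝ) (hδ : 0 < δ) (hδ1 : δ < 1) :
    ∃ C₀ : ℕ, 0 < C₀ ∧ ∀ C : ℕ, C₀ ≤ C → ∀ n : ℕ, 2 ≤ n → ∀ d : ℕ, 1 ≤ d →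
      Real.log n ≤ (d:ℝ) →
      8 ≤ δ * ((C*d : ℕ):ℝ) ∧
      (((C*d*n : ℕ):ℝ) * n * (((C*d : ℕ):ℝ)+1) < (1+δ/4)^(⌊δ*((C*d:ℕ):ℝ)/4⌋₊)) := by
  set c : ℝ := 10000/δ^2 with hc
  have hc1 : (10000:ℝ) ≤ c := by
    rw [hc, le_div_iff₀ (by positivity)]; nlinarith
  refine ⟨⌈c^2⌉₊ + 1, by positivity, ?_⟩
  intro C hC n hn d hd hlog
  have hCc : c^2 ≤ (C:ℝ) := by
    calc c^2 ≤ (⌈c^2⌉₊ : ℝ) := Nat.le_ceil _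
      _ ≤ C := by exact_mod_cast Nat.le_of_succ_le hC
  set m : ℝ := ((C*d : ℕ):ℝ) with hm
  have hmCd : m = (C:ℝ)*(d:ℝ) := by rw [hm]; push_cast; ring
  have hd1 : (1:ℝ) ≤ d := by exact_mod_cast hd
  have hCpos : (0:ℝ) < C := by nlinarith
  have hmc : c^2 ≤ m := by rw [hmCd]; nlinarith
  have hm0 : (0:ℝ) < m := by nlinarith
  have hsC : c ≤ Real.sqrt C := by
    rw [show c = Real.sqrt (c^2) from (Real.sqrt_sq (by positivity)).symm]
    exact Real.sqrt_le_sqrt hCc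
  have hsC1 : (1:ℝ) ≤ Real.sqrt C := by linarith
  have hssC : Real.sqrt C * Real.sqrt C = (C:ℝ) := Real.mul_self_sqrt hCpos.le
  have hdc : δ^2 * c = 10000 := by rw [hc]; field_simp
  -- 8 ≤ δ m
  have hdm : 8 ≤ δ * m := by
    have h1 : δ * c^2 = 10000 * c / δ := by rw [hc]; field_simp
    have h2 : (10000:ℝ) * c / δ ≥ 10000 := by
      rw [ge_iff_le, le_div_iff₀ hδ]; nlinarith
    nlinarith
  refine ⟨hdm, ?_⟩
  -- sqrt m bounds
  have hsm : Real.sqrt m ≤ Real.sqrt C * d := by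
    have : m ≤ ((C:ℝ) * d) * ((d:ℝ)) := by rw [hmCd]; nlinarith
    calc Real.sqrt m ≤ Real.sqrt ((Real.sqrt C * d)^2) := by
          apply Real.sqrt_le_sqrt; nlinarith [hssC]
      _ = Real.sqrt C * d := Real.sqrt_sq (by positivity)
  have hlogm : Real.log (m+1) ≤ 4 * Real.sqrt m := by
    calc Real.log (m+1) ≤ 2 * Real.sqrt (m+1) := gp_log_le _ (by linarith)
      _ ≤ 2 * Real.sqrt ((2 * Real.sqrt m)^2) := by
          apply mul_le_mul_of_nonneg_left _ (by norm_num)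
          apply Real.sqrt_le_sqrt
          have hq : (2*Real.sqrt m)^2 = 4*m := by
            rw [mul_pow, Real.sq_sqrt hm0.le]; ring
          rw [hq]
          nlinarith
      _ = 4 * Real.sqrt m := by
          rw [Real.sqrt_sq (by positivity)]; ring
  have hkey : 2 * Real.log (m+1) + 2*(d:ℝ) < δ^2*m/32 - 1 := by
    have h1 : 2 * Real.log (m+1) ≤ 8 * (Real.sqrt C * d) := by nlinarith
    have h2 : 8 * Real.sqrt C + 4 ≤ δ^2*(C:ℝ)/32 := by nlinarith [hsC1, hsC, hdc, hssC, hδ.le]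
    have h3 : (8 * Real.sqrt C + 4) * d ≤ (δ^2*(C:ℝ)/32) * d := by
      apply mul_le_mul_of_nonneg_right h2 (by positivity)
    have h4 : δ^2*(C:ℝ)/32 * d = δ^2*m/32 := by rw [hmCd]; ring
    linarith
  -- assemble
  set L := ⌊δ*m/4⌋₊ with hL
  have hLb : δ*m/4 - 1 < (L:ℝ) := Nat.sub_one_lt_floor _
  have hpow : Real.exp (δ^2*m/32 - 1) ≤ (1+δ/4)^L := by
    have e1 : Real.exp (δ/8) ≤ 1 + δ/4 := by
      have := gp_exp_le (δ/4) (by positivity) (by linarith)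
      rw [show δ/4/2 = δ/8 by ring] at this
      exact this
    have e2 : Real.exp (δ/8)^L ≤ (1+δ/4)^L := pow_le_pow_left₀ (Real.exp_pos _).le e1 L
    have e3 : Real.exp ((L:ℝ)*(δ/8)) = Real.exp (δ/8)^L := Real.exp_nat_mul _ L
    have e4 : δ^2*m/32 - 1 ≤ (L:ℝ)*(δ/8) := by nlinarith
    calc Real.exp (δ^2*m/32 - 1) ≤ Real.exp ((L:ℝ)*(δ/8)) := Real.exp_le_exp.2 e4
      _ = Real.exp (δ/8)^L := e3
      _ ≤ (1+δ/4)^L := e2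
  have hn0 : (0:ℝ) < n := by
    have : (2:ℝ) ≤ n := by exact_mod_cast hn
    linarith
  have hLHS : ((C*d*n : ℕ):ℝ) * n * (m+1) ≤ Real.exp (2*Real.log (m+1) + 2*(d:ℝ)) := by
    have c1 : ((C*d*n : ℕ):ℝ) = m * n := by rw [hm]; push_cast; ring
    have c2 : Real.exp (2*Real.log (m+1) + 2*Real.log n) = (m+1)^2 * (n:ℝ)^2 := by
      rw [Real.exp_add, show 2*Real.log (m+1) = Real.log (m+1) + Real.log (m+1) by ring,
        show 2*Real.log (n:ℝ) = Real.log (n:ℝ) + Real.log (n:ℝ) by ring,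
        Real.exp_add, Real.exp_add, Real.exp_log (by linarith), Real.exp_log hn0]
      try ring
    calc ((C*d*n : ℕ):ℝ) * n * (m+1) = m * n * n * (m+1) := by rw [c1]; try ring
      _ ≤ (m+1)^2 * (n:ℝ)^2 := by nlinarith
      _ = Real.exp (2*Real.log (m+1) + 2*Real.log n) := c2.symm
      _ ≤ Real.exp (2*Real.log (m+1) + 2*(d:ℝ)) := by
          apply Real.exp_le_exp.2; linarith
  calc ((C*d*n : ℕ):ℝ) * n * (m+1) ≤ Real.exp (2*Real.log (m+1) + 2*(d:ℝ)) := hLHS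
    _ < Real.exp (δ^2*m/32 - 1) := Real.exp_lt_exp.2 hkey
    _ ≤ (1+δ/4)^L := hpow


/-- **Good partition lemma.** For `1/C ≪ δ < α` and `n ≥ 2`: if `log n ≤ d < n` and `G`
is a graph on `N = C·d·n` vertices with minimum degree at least `αN`, then for every
`d`-regular graph `H` on vertex set `[n]` there is a partition of `V(G)` into `n` parts
`V₁, …, V_n` of equal size `m = C·d` with `δ(G[Vᵢ]) ≥ (α-δ)m` for all `i`, and
`δ(G[Vᵢ, Vⱼ]) ≥ (α-δ)m` for all edges `ij` of `H`. -/
theorem good_partition_exists (δ α : ℝ) (hδ : 0 < δ) (hδα : δ < α) :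
    ∃ C₀ : ℕ, 0 < C₀ ∧ ∀ C : ℕ, C₀ ≤ C → ∀ n : ℕ, 2 ≤ n →
      ∀ d : ℕ, Real.log n ≤ (d : ℝ) → d < n →
      ∀ (V : Type) [Fintype V] [DecidableEq V] (G : SimpleGraph V) [DecidableRel G.Adj],
        Fintype.card V = C * d * n →
        (∀ v : V, α * (Fintype.card V : ℝ) ≤ (G.degree v : ℝ)) →
        ∀ (H : SimpleGraph (Fin n)) [DecidableRel H.Adj], H.IsRegularOfDegree d →
          ∃ P : Fin n → Finset V,
            (∀ i j, i ≠ j → Disjoint (P i) (P j)) ∧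
            (Finset.univ.biUnion P = Finset.univ) ∧
            (∀ i, (P i).card = C * d) ∧
            (∀ i, ∀ v ∈ P i, (α - δ) * (C * d : ℝ) ≤ ((P i ∩ G.neighborFinset v).card : ℝ)) ∧
            (∀ i j, H.Adj i j → ∀ v ∈ P i,
              (α - δ) * (C * d : ℝ) ≤ ((P j ∩ G.neighborFinset v).card : ℝ)) := by
  classical
  -- helper to derive α < 1 (or a contradiction) from the degree hypothesis
  have vac : ∀ (C n d : ℕ), 1 ≤ C → 2 ≤ n → 1 ≤ d →
      ∀ (V : Type) [Fintype V] (G : SimpleGraph V) [DecidableRel G.Adj],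
      Fintype.card V = C * d * n →
      (∀ v : V, α * (Fintype.card V : ℝ) ≤ (G.degree v : ℝ)) → α < 1 := by
    intro C n d hC hn hd V _ G _ hcard hdeg
    have hpos : 0 < Fintype.card V := by rw [hcard]; positivity
    obtain ⟨v⟩ := Fintype.card_pos_iff.1 hpos
    have h1 := hdeg v
    have h2 : (G.degree v : ℝ) < Fintype.card V := by
      exact_mod_cast G.degree_lt_card_verts v
    have hNR : (0:ℝ) < Fintype.card V := by exact_mod_cast hpos
    nlinarith
  by_cases hδ1 : δ < 1
  case neg =>
    -- vacuous: α > 1 contradicts the degree condition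
    refine ⟨1, one_pos, ?_⟩
    intro C hC n hn d hlog hdn V _ _ G _ hcard hdeg H _ hH
    exfalso
    have hd : 1 ≤ d := by
      by_contra hd0
      have : d = 0 := by omega
      rw [this] at hlog
      have : (0:ℝ) < Real.log n := Real.log_pos (by exact_mod_cast hn)
      simp at hlog; linarith
    have := vac C n d hC hn hd V G hcard hdeg
    linarith
  case pos =>
  obtain ⟨C₀, hC₀, hnum⟩ := gp_numeric δ hδ hδ1
  refine ⟨C₀, hC₀, ?_⟩
  intro C hC n hn d hlog hdn V _ _ G _ hcard hdeg H _ hH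
  have hd : 1 ≤ d := by
    by_contra hd0
    have hd' : d = 0 := by omega
    rw [hd'] at hlog
    have : (0:ℝ) < Real.log n := Real.log_pos (by exact_mod_cast hn)
    simp at hlog; linarith
  have hC1 : 1 ≤ C := le_trans hC₀ hC
  have hα : α < 1 := vac C n d hC1 hn hd V G hcard hdeg
  obtain ⟨hm8, hbig⟩ := hnum C hC n hn d hd hlog
  set m : ℕ := C * d with hmdef
  have hcard' : Fintype.card V = m * n := hcard
  -- the equivalence and blocks
  set e : Fin (m*n) ≃ V := (Fintype.equivFinOfCardEq hcard').symm with he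
  set Bl : Fin n → Finset (Fin (m*n)) :=
    fun i => Finset.univ.image (fun r : Fin m => finProdFinEquiv (r, i)) with hBl
  have hBlinj : ∀ i : Fin n, Function.Injective (fun r : Fin m => (finProdFinEquiv (r, i) : Fin (m*n))) := by
    intro i a b hab
    have h := finProdFinEquiv.injective hab
    exact (Prod.ext_iff.1 h).1
  have hBlcard : ∀ i, (Bl i).card = m := by
    intro i
    rw [hBl]
    rw [Finset.card_image_of_injective _ (hBlinj i), Finset.card_univ, Fintype.card_fin]
  set P : Equiv.Perm (Fin (m*n)) → Fin n → Finset V :=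
    fun π i => (Bl i).image (fun x => e (π x)) with hP
  -- there is a permutation avoiding all bad events
  have main : ∃ π : Equiv.Perm (Fin (m*n)), ∀ v : V, ∀ i : Fin n,
      (α - δ) * (m:ℝ) ≤ ((P π i ∩ G.neighborFinset v).card : ℝ) := by
    by_contra hno
    push_neg at hno
    set F : Finset (Equiv.Perm (Fin (m*n))) := Finset.univ.filter (fun π =>
      ∃ v : V, ∃ i : Fin n, ((P π i ∩ G.neighborFinset v).card : ℝ) < (α-δ)*m) with hF
    have hFuniv : F = Finset.univ := by
      rw [hF, Finset.filter_true_of_mem]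
      intro π _
      obtain ⟨v, i, hvi⟩ := hno π
      exact ⟨v, i, by linarith [hvi]⟩
    have hFsub : F ⊆ (Finset.univ : Finset V).biUnion (fun v =>
        (Finset.univ : Finset (Fin n)).biUnion (fun i =>
          Finset.univ.filter (fun π : Equiv.Perm (Fin (m*n)) =>
            (((Bl i).image (fun x => e (π x)) ∩ G.neighborFinset v).card : ℝ) < (α-δ)*m))) := by
      intro π hπ
      rw [hF, Finset.mem_filter] at hπ
      obtain ⟨_, v, i, hvi⟩ := hπ
      rw [Finset.mem_biUnion]
      exact ⟨v, Finset.mem_univ _, Finset.mem_biUnion.2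
        ⟨i, Finset.mem_univ _, Finset.mem_filter.2 ⟨Finset.mem_univ _, hvi⟩⟩⟩
    have hcardF : F.card ≤ ∑ v : V, ∑ i : Fin n,
        (Finset.univ.filter (fun π : Equiv.Perm (Fin (m*n)) =>
          (((Bl i).image (fun x => e (π x)) ∩ G.neighborFinset v).card : ℝ) < (α-δ)*m)).card := by
      calc F.card ≤ _ := Finset.card_le_card hFsub
        _ ≤ ∑ v : V, ((Finset.univ : Finset (Fin n)).biUnion (fun i =>
            Finset.univ.filter (fun π : Equiv.Perm (Fin (m*n)) =>
              (((Bl i).image (fun x => e (π x)) ∩ G.neighborFinset v).card : ℝ) < (α-δ)*m))).card :=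
            Finset.card_biUnion_le
        _ ≤ _ := Finset.sum_le_sum (fun v _ => Finset.card_biUnion_le)
    -- per-pair bound
    set K : ℝ := (m+1) * ((Fintype.card V).choose m : ℝ)
        * (Nat.factorial m * Nat.factorial (Fintype.card V - m)) with hK
    have hpair : ∀ (v : V) (i : Fin n),
        ((Finset.univ.filter (fun π : Equiv.Perm (Fin (m*n)) =>
          (((Bl i).image (fun x => e (π x)) ∩ G.neighborFinset v).card : ℝ) < (α-δ)*m)).card : ℝ)
          * (1+δ/4)^(⌊δ*(m:ℝ)/4⌋₊) ≤ K := by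
      intro v i
      have hdegv : α*(Fintype.card V) ≤ ((G.neighborFinset v).card : ℝ) := by
        rw [G.card_neighborFinset_eq_degree v]
        exact hdeg v
      exact gp_badperms δ α m n e (Bl i) (G.neighborFinset v) hδ hδα hα hn hm8
        hcard' hdegv (hBlcard i)
    -- combine
    have hpow : (0:ℝ) < (1+δ/4)^(⌊δ*(m:ℝ)/4⌋₊) := by positivity
    have hNfact : (0:ℝ) < ((m*n).factorial : ℝ) := by positivity
    have htot : ((m*n).factorial : ℝ) * (1+δ/4)^(⌊δ*(m:ℝ)/4⌋₊)
        ≤ ((Fintype.card V : ℝ) * n) * K := by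
      have h1 : ((m*n).factorial : ℝ) = (F.card : ℝ) := by
        rw [hFuniv, Finset.card_univ, Fintype.card_perm, Fintype.card_fin]
      rw [h1]
      calc (F.card : ℝ) * (1+δ/4)^(⌊δ*(m:ℝ)/4⌋₊)
          ≤ ((∑ v : V, ∑ i : Fin n,
            (Finset.univ.filter (fun π : Equiv.Perm (Fin (m*n)) =>
              (((Bl i).image (fun x => e (π x)) ∩ G.neighborFinset v).card : ℝ) < (α-δ)*m)).card : ℕ) : ℝ)
            * (1+δ/4)^(⌊δ*(m:ℝ)/4⌋₊) := by
            apply mul_le_mul_of_nonneg_right _ hpow.le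
            exact_mod_cast hcardF
        _ = ∑ v : V, ∑ i : Fin n,
            ((Finset.univ.filter (fun π : Equiv.Perm (Fin (m*n)) =>
              (((Bl i).image (fun x => e (π x)) ∩ G.neighborFinset v).card : ℝ) < (α-δ)*m)).card : ℝ)
            * (1+δ/4)^(⌊δ*(m:ℝ)/4⌋₊) := by
            push_cast
            rw [Finset.sum_mul]
            congr 1
            ext v
            rw [Finset.sum_mul]
        _ ≤ ∑ v : V, ∑ i : Fin n, K := by
            apply Finset.sum_le_sum; intro v _
            apply Finset.sum_le_sum; intro i _
            exact hpair v i
        _ = ((Fintype.card V : ℝ) * n) * K := by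
            rw [Finset.sum_const, Finset.sum_const]
            simp [Finset.card_univ]
            ring
    -- K * (size) simplification : cardV * n * K = cardV*n*(m+1) * (m*n)!
    have hmle : m ≤ m*n := Nat.le_mul_of_pos_right m (by omega)
    have hKfact : ((Fintype.card V : ℝ) * n) * K
        = (((m*n*n : ℕ)) * ((m:ℝ)+1)) * ((m*n).factorial : ℝ) := by
      rw [hK, hcard']
      have : ((m*n).choose m : ℝ) * (Nat.factorial m * Nat.factorial (m*n - m))
          = ((m*n).factorial : ℝ) := by
        have := Nat.choose_mul_factorial_mul_factorial hmle
        push_cast [← this]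
        ring
      push_cast
      linear_combination ((m:ℝ)*n*n*((m:ℝ)+1)) * this
    -- contradiction with hbig
    have hbig' : (((m*n*n : ℕ)):ℝ) * ((m:ℝ)+1) < (1+δ/4)^(⌊δ*(m:ℝ)/4⌋₊) := by
      have : ((C*d*n : ℕ):ℝ) * n * (((C*d : ℕ):ℝ)+1) = (((m*n*n : ℕ)):ℝ) * ((m:ℝ)+1) := by
        push_cast [hmdef]; ring
      rw [← this]
      exact hbig
    have : ((m*n).factorial : ℝ) * (1+δ/4)^(⌊δ*(m:ℝ)/4⌋₊)
        < (1+δ/4)^(⌊δ*(m:ℝ)/4⌋₊) * ((m*n).factorial : ℝ) := by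
      calc ((m*n).factorial : ℝ) * (1+δ/4)^(⌊δ*(m:ℝ)/4⌋₊) ≤ ((Fintype.card V : ℝ) * n) * K := htot
        _ = ((((m*n*n : ℕ)):ℝ) * ((m:ℝ)+1)) * ((m*n).factorial : ℝ) := hKfact
        _ < (1+δ/4)^(⌊δ*(m:ℝ)/4⌋₊) * ((m*n).factorial : ℝ) := by
            apply mul_lt_mul_of_pos_right hbig' hNfact
    linarith [this, mul_comm (((m*n).factorial : ℝ)) ((1+δ/4)^(⌊δ*(m:ℝ)/4⌋₊))]
  -- use the good permutation
  obtain ⟨π, hgood⟩ := main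
  have hinjeπ : Function.Injective (fun x : Fin (m*n) => e (π x)) :=
    fun a b hab => π.injective (e.injective hab)
  refine ⟨P π, ?_, ?_, ?_, ?_, ?_⟩
  · -- disjoint
    intro i j hij
    rw [Finset.disjoint_left]
    intro v hvi hvj
    rw [hP] at hvi hvj
    obtain ⟨x, hx, hxe⟩ := Finset.mem_image.1 hvi
    obtain ⟨y, hy, hye⟩ := Finset.mem_image.1 hvj
    have hxy : x = y := hinjeπ (hxe.trans hye.symm)
    rw [hBl] at hx hy
    obtain ⟨r, _, hr⟩ := Finset.mem_image.1 hx
    obtain ⟨s, _, hs⟩ := Finset.mem_image.1 hy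
    apply hij
    have : (r, i) = (s, j) := finProdFinEquiv.injective (by rw [hr, hs, hxy])
    exact congrArg Prod.snd this
  · -- cover
    apply Finset.eq_univ_iff_forall.2
    intro v
    rw [Finset.mem_biUnion]
    refine ⟨(finProdFinEquiv.symm (π.symm (e.symm v))).2, Finset.mem_univ _, ?_⟩
    rw [hP]
    apply Finset.mem_image.2
    refine ⟨π.symm (e.symm v), ?_, by simp⟩
    rw [hBl]
    apply Finset.mem_image.2
    refine ⟨(finProdFinEquiv.symm (π.symm (e.symm v))).1, Finset.mem_univ _, ?_⟩
    rw [Prod.mk.eta, Equiv.apply_symm_apply]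
  · -- cards
    intro i
    rw [hP, Finset.card_image_of_injective _ hinjeπ, hBlcard i]
  · -- own part degrees
    intro i v _
    have := hgood v i
    have hcast : ((C:ℕ):ℝ) * ((d:ℕ):ℝ) = (m:ℝ) := by rw [hmdef]; push_cast; ring
    rw [← hcast] at this
    exact_mod_cast this
  · -- cross degrees
    intro i j _ v _
    have := hgood v j
    have hcast : ((C:ℕ):ℝ) * ((d:ℕ):ℝ) = (m:ℝ) := by rw [hmdef]; push_cast; ring
    rw [← hcast] at this
    exact_mod_cast this
end
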